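/- arXiv:1402.3906 — 7 statements merged into one kernel-verified Lean document; each statement's English description precedes it below -/
import Mathlib

section
/- Two elements of a free group whose reduced words are cyclically reduced are conjugate if and only if their reduced words are cyclic rotations of each other. Precisely: for x, y in the free group on α such that x.toWord and y.toWord are cyclically reduced, IsConj x y holds if and only if y.toWord is a cyclic rotation (List.IsRotated) of x.toWord. -/
namespace FGConj
open FreeGroup List

variable {α : Type*} [DecidableEq α]

def Reduced (L : List (α × Bool)) : Prop :=
  List.IsChain (fun a b => b ≠ (a.1, !a.2)) L

lemma reduce_eq_self_of_reduced : ∀ {L : List (α × Bool)}, Reduced L → FreeGroup.reduce L = L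
  | [], _ => rfl
  | [x], _ => rfl
  | x :: y :: t, h => by
    rw [Reduced, List.isChain_cons_cons] at h
    rw [FreeGroup.reduce.cons, reduce_eq_self_of_reduced h.2]
    have : ¬ (x.1 = y.1 ∧ x.2 = !y.2) := by
      rintro ⟨h1, h2⟩
      exact h.1 (by ext <;> simp [h1, h2])
    simp [this]

lemma exists_decomp_of_not_reduced : ∀ {L : List (α × Bool)}, ¬ Reduced L →
    ∃ (L1 L2 : List (α × Bool)) (a : α) (c : Bool), L = L1 ++ (a, c) :: (a, !c) :: L2
  | [], h => absurd List.isChain_nil h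
  | [x], h => absurd (List.isChain_singleton x) h
  | x :: y :: t, h => by
    rw [Reduced, List.isChain_cons_cons] at h
    by_cases hxy : y = (x.1, !x.2)
    · exact ⟨[], t, x.1, x.2, by simp [hxy]⟩
    · have := exists_decomp_of_not_reduced (L := y :: t) (fun hc => h ⟨hxy, hc⟩)
      obtain ⟨L1, L2, a, c, hdec⟩ := this
      exact ⟨x :: L1, L2, a, c, by simp [hdec]⟩

lemma reduced_reduce (L : List (α × Bool)) : Reduced (FreeGroup.reduce L) := by
  by_contra h
  obtain ⟨L1, L2, a, c, hdec⟩ := exists_decomp_of_not_reduced h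
  exact FreeGroup.reduce.not hdec

lemma reduced_toWord (x : FreeGroup α) : Reduced x.toWord := by
  rw [← FreeGroup.reduce_toWord]; exact reduced_reduce _

lemma toWord_mk_of_reduced {L : List (α × Bool)} (h : Reduced L) :
    (FreeGroup.mk L).toWord = L := by
  rw [FreeGroup.toWord_mk, reduce_eq_self_of_reduced h]

omit [DecidableEq α] in
lemma reduced_invRev {L : List (α × Bool)} (h : Reduced L) : Reduced (FreeGroup.invRev L) := by
  rw [Reduced, FreeGroup.invRev, List.isChain_reverse, List.isChain_map]
  refine h.imp ?_
  rintro ⟨a1, c1⟩ ⟨a2, c2⟩ hne heq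
  apply hne
  cases c1 <;> cases c2 <;> simp_all [Function.flip_def]

omit [DecidableEq α] in
lemma invRev_append (L1 L2 : List (α × Bool)) :
    FreeGroup.invRev (L1 ++ L2) = FreeGroup.invRev L2 ++ FreeGroup.invRev L1 := by
  simp [FreeGroup.invRev]

omit [DecidableEq α] in
lemma invRev_singleton (a : α) (b : Bool) :
    FreeGroup.invRev [(a, b)] = [(a, !b)] := by
  simp [FreeGroup.invRev]

omit [DecidableEq α] in
lemma head?_invRev (L : List (α × Bool)) :
    (FreeGroup.invRev L).head? = L.getLast?.map (fun p => (p.1, !p.2)) := by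
  simp [FreeGroup.invRev, List.head?_reverse]

omit [DecidableEq α] in
lemma getLast?_invRev (L : List (α × Bool)) :
    (FreeGroup.invRev L).getLast? = L.head?.map (fun p => (p.1, !p.2)) := by
  simp [FreeGroup.invRev, List.getLast?_reverse]

lemma getLast?_cons_ne {β : Type*} (a : β) : ∀ {l : List β}, l ≠ [] → (a :: l).getLast? = l.getLast?
  | [], h => absurd rfl h
  | b :: t, _ => by rw [List.getLast?_cons_cons]

omit [DecidableEq α] in
lemma mk_cons_cons (a : α) (b : Bool) (L : List (α × Bool)) :
    FreeGroup.mk ((a, b) :: (a, !b) :: L) = FreeGroup.mk L := by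
  have : (a, b) :: (a, !b) :: L = [(a, b)] ++ [(a, !b)] ++ L := by simp
  rw [this, ← FreeGroup.mul_mk, ← FreeGroup.mul_mk]
  have h2 : FreeGroup.mk [(a, !b)] = (FreeGroup.mk [(a, b)])⁻¹ := by
    rw [FreeGroup.inv_mk, invRev_singleton]
  rw [h2, mul_inv_cancel, one_mul]

omit [DecidableEq α] in
lemma mk_append_pair (a : α) (b : Bool) (L : List (α × Bool)) :
    FreeGroup.mk (L ++ [(a, b), (a, !b)]) = FreeGroup.mk L := by
  have : L ++ [(a, b), (a, !b)] = L ++ ([(a, b)] ++ [(a, !b)]) := by simp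
  rw [this, ← FreeGroup.mul_mk, ← FreeGroup.mul_mk]
  have h2 : FreeGroup.mk [(a, !b)] = (FreeGroup.mk [(a, b)])⁻¹ := by
    rw [FreeGroup.inv_mk, invRev_singleton]
  rw [h2]
  rw [mul_inv_cancel, mul_one]

omit [DecidableEq α] in
lemma mk_append_invRev (L : List (α × Bool)) :
    FreeGroup.mk (L ++ FreeGroup.invRev L) = 1 := by
  rw [← FreeGroup.mul_mk, ← FreeGroup.inv_mk, mul_inv_cancel]

omit [DecidableEq α] in
lemma isConj_mk_append (u v : List (α × Bool)) :
    IsConj (FreeGroup.mk (u ++ v)) (FreeGroup.mk (v ++ u)) := by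
  rw [isConj_iff]
  refine ⟨FreeGroup.mk v, ?_⟩
  rw [FreeGroup.mul_mk, FreeGroup.inv_mk, FreeGroup.mul_mk]
  have h : (v ++ (u ++ v)) ++ FreeGroup.invRev v = (v ++ u) ++ (v ++ FreeGroup.invRev v) := by
    simp
  rw [h, ← FreeGroup.mul_mk, mk_append_invRev, mul_one]

/-- cyclically reduced predicate on a word -/
def CycRed (w : List (α × Bool)) : Prop :=
  ¬ ∃ (a : α) (b : Bool), w.head? = some (a, b) ∧ w.getLast? = some (a, !b)

/-- The key induction: conjugation by an element of reduced-word length ≤ n. -/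
lemma key : ∀ (n : ℕ) (g x y : FreeGroup α), g.toWord.length ≤ n →
    CycRed x.toWord → CycRed y.toWord → g * x * g⁻¹ = y → y.toWord ~r x.toWord := by
  intro n
  induction n with
  | zero =>
    intro g x y hlen _ _ hconj
    have hg : g = 1 := by
      rw [← FreeGroup.toWord_eq_nil_iff, ← List.length_eq_zero_iff]
      omega
    subst hg
    simp only [one_mul, inv_one, mul_one] at hconj
    rw [hconj]
  | succ n ih =>
    intro g x y hlen hx hy hconj
    rcases eq_or_ne g.toWord [] with hgnil | hgne
    · have hg : g = 1 := FreeGroup.toWord_eq_nil_iff.mp hgnil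
      subst hg
      simp only [one_mul, inv_one, mul_one] at hconj
      rw [hconj]
    · -- decompose g's word as u' ++ [(a,b)]
      obtain ⟨u', p, hu⟩ := (List.eq_nil_or_concat g.toWord).resolve_left hgne
      obtain ⟨a, b⟩ := p
      have hured : Reduced g.toWord := reduced_toWord g
      rw [List.concat_eq_append] at hu
      have hu'red : Reduced u' := by
        have := hu ▸ hured
        exact (List.isChain_append.mp this).1
      have hJ1 : ∀ p ∈ u'.getLast?, (a, b) ≠ (p.1, !p.2) := by
        intro p hp
        have := hu ▸ hured
        have := (List.isChain_append.mp this).2.2 p hp (a, b) rfl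
        exact this
      -- g = h * s
      set h : FreeGroup α := FreeGroup.mk u' with hh
      set s : FreeGroup α := FreeGroup.mk [(a, b)] with hs
      have hgs : g = h * s := by
        rw [hh, hs, FreeGroup.mul_mk, ← hu, FreeGroup.mk_toWord]
      have hhw : h.toWord = u' := toWord_mk_of_reduced hu'red
      have hhlen : h.toWord.length ≤ n := by
        have : g.toWord.length = u'.length + 1 := by rw [hu]; simp
        rw [hhw]; omega
      have hsinv : s⁻¹ = FreeGroup.mk [(a, !b)] := by
        rw [hs, FreeGroup.inv_mk, invRev_singleton]
      obtain ⟨w, hwdef⟩ : ∃ w, w = x.toWord := ⟨_, rfl⟩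
      rw [← hwdef] at hx ⊢
      have hwred : Reduced w := hwdef ▸ reduced_toWord x
      have hxw : x = FreeGroup.mk w := by rw [hwdef, FreeGroup.mk_toWord]
      rcases eq_or_ne w [] with hwnil | hwne
      · -- x = 1
        have hx1 : x = 1 := FreeGroup.toWord_eq_nil_iff.mp (hwdef ▸ hwnil)
        have hy1 : y = 1 := by rw [← hconj, hx1]; group
        rw [hy1, FreeGroup.toWord_one, hwnil]
      · have hconj' : h * (s * x * s⁻¹) * h⁻¹ = y := by
          rw [← hconj, hgs]; group
        by_cases hA : w.head? = some (a, !b)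
        · -- Case A : w = (a,!b) :: t
          obtain ⟨t, ht⟩ : ∃ t, w = (a, !b) :: t := by
            cases w with
            | nil => simp at hA
            | cons q t =>
              simp only [List.head?_cons, Option.some.injEq] at hA
              exact ⟨t, by rw [hA]⟩
          set z : FreeGroup α := FreeGroup.mk (t ++ [(a, !b)]) with hz
          have hsx : s * x * s⁻¹ = z := by
            rw [hxw, ht, hs, hsinv, FreeGroup.mul_mk, FreeGroup.mul_mk, hz]
            have : ([(a, b)] ++ (a, !b) :: t) ++ [(a, !b)]
                = (a, b) :: (a, !b) :: (t ++ [(a, !b)]) := by simp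
            rw [this, mk_cons_cons]
          -- reducedness of t ++ [(a,!b)]
          have htred : Reduced t := by
            have := ht ▸ hwred
            exact this.tail
          have hjt : ∀ p ∈ t.getLast?, (a, !b) ≠ (p.1, !p.2) := by
            intro p hp hpe
            -- then p = (a,b), so w ends with (a,b) and starts with (a,!b): contradict hx
            have hp2 : p = (a, b) := by
              have h1 : a = p.1 := congrArg Prod.fst hpe
              have h2 : (!b) = !p.2 := congrArg Prod.snd hpe
              exact Prod.ext h1.symm (Bool.not_inj h2).symm
            have htne : t ≠ [] := by rintro rfl; simp at hp
            apply hx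
            refine ⟨a, !b, ?_, ?_⟩
            · rw [ht]; rfl
            · rw [ht, Bool.not_not, getLast?_cons_ne _ htne]
              exact Option.mem_def.mp (hp2 ▸ hp)
          have hzred : Reduced (t ++ [(a, !b)]) := by
            rw [Reduced, List.isChain_append]
            exact ⟨htred, List.isChain_singleton _, by
              intro p hp q hq
              simp only [List.head?_cons, Option.mem_def, Option.some.injEq] at hq
              rw [← hq]
              exact hjt p hp⟩
          have hztw : z.toWord = t ++ [(a, !b)] := toWord_mk_of_reduced hzred
          have hzcyc : CycRed z.toWord := by
            rw [hztw]
            rintro ⟨c, d, hhead, hlast⟩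
            have hl0 : (t ++ [(a, !b)]).getLast? = some (a, !b) := by simp
            have hlast' : ((c : α), !d) = (a, !b) := Option.some.inj (hlast.symm.trans hl0)
            have hca : c = a := congrArg Prod.fst hlast'
            have hdb : d = b := Bool.not_inj (congrArg Prod.snd hlast')
            subst hca; subst hdb
            cases t with
            | nil => simp at hhead
            | cons q t' =>
              simp only [List.cons_append, List.head?_cons, Option.some.injEq] at hhead
              have hch := ht ▸ hwred
              rw [Reduced, List.isChain_cons_cons] at hch
              exact hch.1 (by rw [hhead]; simp)
          have hrot : z.toWord ~r w := by
            rw [hztw, ht]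
            exact List.IsRotated.symm ⟨1, by rw [List.rotate_cons_succ, List.rotate_zero]⟩
          have hconj'' : h * z * h⁻¹ = y := by rw [hsx] at hconj'; exact hconj'
          have := ih h z y hhlen hzcyc hy hconj''
          exact this.trans hrot
        · by_cases hB : w.getLast? = some (a, b)
          · -- Case B : w = t ++ [(a,b)]
            obtain ⟨t, ht⟩ : ∃ t, w = t ++ [(a, b)] := by
              refine ⟨w.dropLast, ?_⟩
              conv_lhs => rw [← List.dropLast_append_getLast hwne]
              congr 1
              have := List.getLast?_eq_getLast hwne
              rw [this] at hB
              simp at hB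
              rw [hB]
            set z : FreeGroup α := FreeGroup.mk ((a, b) :: t) with hz
            have hsx : s * x * s⁻¹ = z := by
              rw [hxw, ht, hs, hsinv, FreeGroup.mul_mk, FreeGroup.mul_mk, hz]
              have : ([(a, b)] ++ (t ++ [(a, b)])) ++ [(a, !b)]
                  = ((a, b) :: t) ++ [(a, b), (a, !b)] := by simp
              rw [this, mk_append_pair]
            have hsplit := List.isChain_append.mp (ht ▸ hwred : List.IsChain _ (t ++ [(a, b)]))
            have htred : Reduced t := hsplit.1
            have hjt : ∀ p ∈ t.getLast?, (a, b) ≠ (p.1, !p.2) := fun p hp =>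
              hsplit.2.2 p hp (a, b) rfl
            have hzred : Reduced ((a, b) :: t) := by
              rw [Reduced, List.isChain_cons]
              refine ⟨?_, htred⟩
              intro q hq hqe
              apply hA
              cases t with
              | nil => simp at hq
              | cons r t' =>
                simp only [List.head?_cons, Option.mem_def, Option.some.injEq] at hq
                rw [ht]
                simp only [List.cons_append, List.head?_cons]
                rw [hq, hqe]
            have hztw : z.toWord = (a, b) :: t := toWord_mk_of_reduced hzred
            have hzcyc : CycRed z.toWord := by
              rw [hztw]
              rintro ⟨c, d, hhead, hlast⟩
              simp only [List.head?_cons, Option.some.injEq] at hhead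
              have hca : c = a := (congrArg Prod.fst hhead).symm
              have hdb : d = b := (congrArg Prod.snd hhead).symm
              subst hca; subst hdb
              cases t with
              | nil => simp at hlast
              | cons r t' =>
                rw [getLast?_cons_ne _ (by simp)] at hlast
                exact hjt _ hlast (by simp)
            have hrot : z.toWord ~r w := by
              rw [hztw, ht]
              exact ⟨1, by rw [List.rotate_cons_succ, List.rotate_zero]⟩
            have hconj'' : h * z * h⁻¹ = y := by rw [hsx] at hconj'; exact hconj'
            have := ih h z y hhlen hzcyc hy hconj''
            exact this.trans hrot
          · -- Case C : contradiction with hy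
            exfalso
            set F : List (α × Bool) :=
              u' ++ (a, b) :: (w ++ (a, !b) :: FreeGroup.invRev u') with hF
            have hyF : y = FreeGroup.mk F := by
              rw [← hconj, hgs, hxw, hs, hh]
              rw [mul_inv_rev, FreeGroup.inv_mk, FreeGroup.inv_mk]
              repeat rw [FreeGroup.mul_mk]
              congr 1
              rw [invRev_singleton]
              simp [hF]
            have hw_head : ∀ q ∈ w.head?, q ≠ (a, !b) := by
              intro q hq hqe
              exact hA (hqe ▸ hq)
            have hw_last : ∀ p ∈ w.getLast?, p ≠ (a, b) := by
              intro p hp hpe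
              exact hB (hpe ▸ hp)
            have hinvred : Reduced (FreeGroup.invRev u') := reduced_invRev hu'red
            have hFred : Reduced F := by
              rw [hF, Reduced, List.isChain_append]
              refine ⟨hu'red, ?_, ?_⟩
              · rw [List.isChain_cons]
                constructor
                · intro q hq hqe
                  cases w with
                  | nil => exact hwne rfl
                  | cons r t =>
                    simp only [List.cons_append, List.head?_cons, Option.mem_def,
                      Option.some.injEq] at hq
                    exact hw_head r rfl (by rw [hq, hqe])
                · rw [List.isChain_append]
                  refine ⟨hwred, ?_, ?_⟩
                  · rw [List.isChain_cons]
                    refine ⟨?_, hinvred⟩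
                    intro q hq hqe
                    rw [head?_invRev] at hq
                    simp only [Option.mem_def, Option.map_eq_some_iff] at hq
                    obtain ⟨p, hp, hq'⟩ := hq
                    apply hJ1 p hp
                    rw [← hq'] at hqe
                    simpa using hqe.symm
                  · intro p hp q hq
                    simp only [List.head?_cons, Option.mem_def, Option.some.injEq] at hq
                    rw [← hq]
                    intro hpe
                    apply hw_last p hp
                    have h1 : p.1 = a := (congrArg Prod.fst hpe).symm
                    have h2 : p.2 = b := Bool.not_inj (congrArg Prod.snd hpe).symm
                    exact Prod.ext h1 h2
              · intro p hp q hq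
                simp only [List.head?_cons, Option.mem_def, Option.some.injEq] at hq
                rw [← hq]
                exact (hJ1 p hp)
            have hytw : y.toWord = F := by rw [hyF]; exact toWord_mk_of_reduced hFred
            apply hy
            cases u' with
            | nil =>
              refine ⟨a, b, ?_, ?_⟩
              · rw [hytw, hF]; simp
              · rw [hytw, hF]
                simp only [FreeGroup.invRev, List.map_nil, List.reverse_nil, List.nil_append]
                rw [getLast?_cons_ne _ (by simp)]
                simp
            | cons p rest =>
              refine ⟨p.1, p.2, ?_, ?_⟩
              · rw [hytw, hF]; simp
              · rw [hytw, hF]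
                have hinvne : FreeGroup.invRev (p :: rest) ≠ [] := by
                  intro hc
                  have := congrArg List.length hc
                  rw [FreeGroup.invRev_length] at this
                  simp at this
                rw [List.getLast?_append_of_ne_nil _ (by simp)]
                rw [getLast?_cons_ne _ (by simp [hinvne])]
                rw [List.getLast?_append_of_ne_nil _ (by simp)]
                rw [getLast?_cons_ne _ hinvne]
                rw [getLast?_invRev]
                simp

end FGConj

/-- Two elements of a free group whose reduced words are cyclically reduced are
conjugate if and only if their reduced words are cyclic rotations of each other. -/
theorem isConj_iff_isRotated_of_cyclicallyReduced {α : Type*} [DecidableEq α]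
    (x y : FreeGroup α)
    (hx : ¬ ∃ (a : α) (b : Bool),
      x.toWord.head? = some (a, b) ∧ x.toWord.getLast? = some (a, !b))
    (hy : ¬ ∃ (a : α) (b : Bool),
      y.toWord.head? = some (a, b) ∧ y.toWord.getLast? = some (a, !b)) :
    IsConj x y ↔ y.toWord ~r x.toWord := by
  constructor
  · intro hconj
    rw [isConj_iff] at hconj
    obtain ⟨g, hg⟩ := hconj
    exact FGConj.key g.toWord.length g x y le_rfl hx hy hg
  · intro hrot
    obtain ⟨n, hn⟩ := hrot
    set w := y.toWord with hw
    have hyw : y = FreeGroup.mk w := (FreeGroup.mk_toWord).symm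
    rcases eq_or_ne w [] with hnil | hne
    · have : x.toWord = [] := by rw [← hn, hnil]; simp
      have hx1 : x = 1 := FreeGroup.toWord_eq_nil_iff.mp this
      have hy1 : y = 1 := FreeGroup.toWord_eq_nil_iff.mp hnil
      rw [hx1, hy1]
    · have hlen : 0 < w.length := List.length_pos_iff.mpr hne
      set m := n % w.length with hm
      have hmle : m ≤ w.length := le_of_lt (Nat.mod_lt _ hlen)
      have hrot' : w.rotate m = x.toWord := by
        rw [hm, List.rotate_mod, hn]
      rw [List.rotate_eq_drop_append_take hmle] at hrot'
      have hxw : x = FreeGroup.mk (w.drop m ++ w.take m) := by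
        rw [hrot', FreeGroup.mk_toWord]
      have hyw' : y = FreeGroup.mk (w.take m ++ w.drop m) := by
        rw [List.take_append_drop, hyw]
      rw [hxw, hyw']
      exact FGConj.isConj_mk_append _ _
end

section
/- In a free product of groups, every element of finite order is conjugate to an element of one of the factors. Precisely: let (Gᵢ)_{i ∈ ι} be a family of groups and let x ∈ Monoid.CoprodI G be an element of finite order with x ≠ 1. Then there exist an index i, an element g ∈ Gᵢ, and an element c of the free product such that x = c · (CoprodI.of g) · c⁻¹. -/
open Monoid CoprodI

namespace CoprodIAux

variable {ι : Type*} {G : ι → Type*} [∀ i, Group (G i)]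

theorem prod_ne_one {i j} (w : CoprodI.NeWord G i j) : w.prod ≠ 1 := by
  classical
  intro h
  have hinj : Function.Injective (CoprodI.Word.prod : CoprodI.Word G → CoprodI G) :=
    CoprodI.Word.equiv.symm.injective
  have : w.toWord = CoprodI.Word.empty := by
    apply hinj
    rw [CoprodI.Word.prod_empty]
    exact h
  exact w.toList_ne_nil (by rw [show w.toList = w.toWord.toList from rfl, this]; rfl)

theorem pow_ne_one {i j} (hij : i ≠ j) (w : CoprodI.NeWord G i j) (n : ℕ) :
    w.prod ^ (n + 1) ≠ 1 := by
  have : ∀ m : ℕ, ∃ w' : CoprodI.NeWord G i j, w'.prod = w.prod ^ (m + 1) := by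
    intro m
    induction m with
    | zero => exact ⟨w, (pow_one _).symm⟩
    | succ m ih =>
      obtain ⟨w', hw'⟩ := ih
      exact ⟨w'.append (Ne.symm hij) w, by rw [CoprodI.NeWord.append_prod, hw', ← pow_succ]⟩
  obtain ⟨w', hw'⟩ := this n
  rw [← hw']
  exact prod_ne_one w'

theorem len1_eq {i j} (w : CoprodI.NeWord G i j) (h : w.toList.length = 1) : i = j := by
  obtain ⟨a, ha⟩ := List.length_eq_one_iff.mp h
  have h1 := w.toList_head?
  have h2 := w.toList_getLast?
  rw [ha] at h1 h2
  simp at h1 h2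
  exact congrArg Sigma.fst (h1.symm.trans h2)

theorem inv_length {i j} (w : CoprodI.NeWord G i j) :
    w.inv.toList.length = w.toList.length := by
  induction w with
  | singleton x h => rfl
  | append w₁ hne w₂ ih₁ ih₂ => simp [CoprodI.NeWord.inv, ih₁, ih₂, Nat.add_comm]

theorem decomp_head {i j} (w : CoprodI.NeWord G i j) :
    (w.toList.length = 1 ∧ w.prod = CoprodI.of w.head) ∨
    ∃ k, i ≠ k ∧ ∃ w₂ : CoprodI.NeWord G k j,
      w.prod = CoprodI.of w.head * w₂.prod ∧ w.toList.length = w₂.toList.length + 1 := by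
  induction w with
  | singleton x h => exact Or.inl ⟨rfl, by simp⟩
  | append w₁ hne w₂ ih₁ _ =>
    right
    rcases ih₁ with ⟨hlen, hprod⟩ | ⟨k, hik, w₁', hprod, hlen⟩
    · obtain rfl := len1_eq w₁ hlen
      exact ⟨_, hne, w₂, by simp [hprod], by simp [hlen]; omega⟩
    · refine ⟨k, hik, w₁'.append hne w₂, by simp [hprod, mul_assoc], ?_⟩
      simp [hlen]; omega

theorem decomp_last {i j} (w : CoprodI.NeWord G i j) :
    (w.toList.length = 1 ∧ w.prod = CoprodI.of w.last) ∨
    ∃ k, k ≠ j ∧ ∃ w₂ : CoprodI.NeWord G i k,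
      w.prod = w₂.prod * CoprodI.of w.last ∧ w.toList.length = w₂.toList.length + 1 := by
  rcases decomp_head w.inv with ⟨hlen, hprod⟩ | ⟨k, hjk, w₂, hprod, hlen⟩
  · left
    rw [CoprodI.NeWord.inv_prod, CoprodI.NeWord.inv_head, map_inv] at hprod
    exact ⟨by rw [← inv_length w]; exact hlen, by rw [← inv_inv w.prod, hprod, inv_inv]⟩
  · right
    refine ⟨k, hjk.symm, w₂.inv, ?_, ?_⟩
    · rw [CoprodI.NeWord.inv_prod, CoprodI.NeWord.inv_head, map_inv] at hprod
      rw [CoprodI.NeWord.inv_prod]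
      rw [← inv_inv w.prod, hprod]
      group
    · rw [← inv_length w, inv_length w₂] at *
      omega

theorem conj_finOrder {H : Type*} [Group H] {x c : H} (h : IsOfFinOrder x) :
    IsOfFinOrder (c⁻¹ * x * c) := by
  obtain ⟨n, hn, h1⟩ := h.exists_pow_eq_one
  refine isOfFinOrder_iff_pow_eq_one.mpr ⟨n, hn, ?_⟩
  have : c⁻¹ * x * c = c⁻¹ * x * c⁻¹⁻¹ := by rw [inv_inv]
  rw [this, conj_pow, h1]
  group

theorem key : ∀ (n : ℕ) {i j} (w : CoprodI.NeWord G i j), w.toList.length ≤ n →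
    IsOfFinOrder w.prod →
    ∃ (k : ι) (g : G k) (c : CoprodI G), w.prod = c * CoprodI.of g * c⁻¹ := by
  intro n
  induction n using Nat.strong_induction_on with
  | _ n ih =>
  intro i j w hlen hfin
  by_cases hij : i = j
  · subst hij
    rcases decomp_head w with ⟨h1, hprod⟩ | ⟨k, hik, w₂, hprod, hlen'⟩
    · exact ⟨i, w.head, 1, by simp [hprod]⟩
    · rcases decomp_last w₂ with ⟨h1, hprod₂⟩ | ⟨m, hmi, w₃, hprod₂, hlen₂⟩
      · exact absurd (len1_eq w₂ h1).symm hik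
      · have key0 : (CoprodI.of w.head)⁻¹ * w.prod * CoprodI.of w.head
            = w₃.prod * CoprodI.of (w₂.last * w.head) := by
          rw [hprod, hprod₂, map_mul]
          group
        have hfin' : IsOfFinOrder (w₃.prod * CoprodI.of (w₂.last * w.head)) := by
          rw [← key0]; exact conj_finOrder hfin
        by_cases ha : w₂.last * w.head = 1
        · have hfin'' : IsOfFinOrder w₃.prod := by
            rwa [ha, map_one, mul_one] at hfin'
          obtain ⟨k', g, c, hc⟩ := ih w₃.toList.length (by omega) w₃ le_rfl hfin''
          refine ⟨k', g, CoprodI.of w.head * c, ?_⟩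
          have hx : w.prod = CoprodI.of w.head * (w₃.prod * CoprodI.of (w₂.last * w.head))
              * (CoprodI.of w.head)⁻¹ := by rw [← key0]; group
          rw [hx, ha, map_one, mul_one, hc]
          group
        · set w' := w₃.append hmi (CoprodI.NeWord.singleton _ ha) with hw'def
          have hw' : w'.prod = w₃.prod * CoprodI.of (w₂.last * w.head) := by
            simp [hw'def]
          have hlw' : w'.toList.length < n := by
            have : w'.toList.length = w₃.toList.length + 1 := by simp [hw'def]
            omega
          obtain ⟨k', g, c, hc⟩ := ih w'.toList.length hlw' w' le_rfl (by rw [hw']; exact hfin')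
          refine ⟨k', g, CoprodI.of w.head * c, ?_⟩
          have hx : w.prod = CoprodI.of w.head * w'.prod * (CoprodI.of w.head)⁻¹ := by
            rw [hw', ← key0]; group
          rw [hx, hc]
          group
  · exfalso
    have hpos := hfin.orderOf_pos
    have := pow_ne_one hij w (orderOf w.prod - 1)
    rw [Nat.sub_add_cancel hpos, pow_orderOf_eq_one] at this
    exact this rfl

end CoprodIAux

/-- In a free product of groups, every element of finite order is conjugate to an
element of one of the factors. -/
theorem finOrder_conj_of_factor {ι : Type*} (G : ι → Type*) [∀ i, Group (G i)]
    (x : Monoid.CoprodI G) (hx : IsOfFinOrder x) (hx1 : x ≠ 1) :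
    ∃ (i : ι) (g : G i) (c : Monoid.CoprodI G),
      x = c * Monoid.CoprodI.of g * c⁻¹ := by
  classical
  have hne : CoprodI.Word.equiv x ≠ CoprodI.Word.empty := by
    intro h
    apply hx1
    have := CoprodI.Word.equiv.symm_apply_apply x
    rw [h] at this
    rw [← this]
    exact CoprodI.Word.prod_empty
  obtain ⟨i, j, w, hw⟩ := CoprodI.NeWord.of_word (CoprodI.Word.equiv x) hne
  have hx' : w.prod = x := by
    show w.toWord.prod = x
    rw [hw]
    exact CoprodI.Word.equiv.symm_apply_apply x
  obtain ⟨k, g, c, h⟩ := CoprodIAux.key w.toList.length w le_rfl (hx' ▸ hx)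
  exact ⟨k, g, c, hx' ▸ h⟩
end

section
/- In the group with two generators a, b and the single defining relation a^p · b^q = 1, where p, q ≥ 2, the center is exactly the subgroup generated by a^p. Precisely: in G = PresentedGroup {x^p * y^q} (x, y the two free generators), Subgroup.center G = Subgroup.closure {a^p}, where a is the image of the first generator. -/
open Monoid CoprodI CoprodI.Word

section WordAux

variable {ι : Type*} {M : ι → Type*} [∀ i, Group (M i)] [∀ i, DecidableEq (M i)]

namespace CenterAux

/-- inverse of a reduced word: reverse the list and invert entries -/
def wordInv (w : Word M) : Word M where
  toList := (w.toList.map fun l => ⟨l.1, l.2⁻¹⟩).reverse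
  ne_one := by
    intro l hl
    simp only [List.mem_reverse, List.mem_map] at hl
    rcases hl with ⟨l', hl', rfl⟩
    simpa using w.ne_one l' hl'
  chain_ne := by
    rw [List.isChain_reverse]
    refine (List.isChain_map _).2 ?_
    refine w.chain_ne.imp ?_
    intro a b h hc
    exact h hc.symm

@[simp]
theorem wordInv_toList (w : Word M) :
    (wordInv w).toList = (w.toList.map fun l => ⟨l.1, l.2⁻¹⟩).reverse := rfl

theorem prod_wordInv (w : Word M) : (wordInv w).prod = w.prod⁻¹ := by
  rw [Word.prod, Word.prod, wordInv_toList, List.map_reverse, List.prod_reverse_noncomm,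
    List.map_map, List.map_map]
  congr 1
  exact congrArg List.prod (List.map_congr_left fun l _ => by simp)

variable [DecidableEq ι]

theorem wordInv_wordInv_toList (w : Word M) : (wordInv (wordInv w)).toList = w.toList := by
  simp only [wordInv_toList, List.map_reverse, List.reverse_reverse, List.map_map]
  convert List.map_id _ using 1
  apply List.map_congr_left
  intro l _
  simp

theorem length_wordInv (w : Word M) : (wordInv w).toList.length = w.toList.length := by
  simp [wordInv_toList]

theorem equiv_mul (g x : CoprodI M) : Word.equiv (g * x) = g • Word.equiv x := by
  simp only [Word.equiv, Equiv.coe_fn_mk]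
  rw [mul_smul]

theorem equiv_prod (w : Word M) : Word.equiv w.prod = w :=
  (Word.equiv (M := M)).apply_symm_apply w

theorem equiv_inv (x : CoprodI M) : Word.equiv x⁻¹ = wordInv (Word.equiv x) := by
  have h : (wordInv (Word.equiv x)).prod = x⁻¹ := by
    rw [prod_wordInv]
    exact congrArg (·⁻¹) ((Word.equiv (M := M)).symm_apply_apply x)
  rw [← h, equiv_prod]

theorem of_smul_eq_cons {i} (m : M i) (hm : m ≠ 1) (w : Word M) (h : fstIdx w ≠ some i) :
    of m • w = cons m w h hm := by
  rw [of_smul_def, equivPair_eq_of_fstIdx_ne h]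
  simp [rcons, hm]

theorem length_of_smul_le {i} (m : M i) (w : Word M) (h : fstIdx w = some i) :
    (of m • w).toList.length ≤ w.toList.length := by
  induction w using Word.consRecOn with
  | empty => simp [fstIdx, Word.empty] at h
  | cons j m' w' h1 h2 ih =>
    have hj : j = i := by
      simpa [fstIdx, cons] using h
    subst hj
    have e : of m • (cons m' w' h1 h2) = of (m * m') • w' := by
      rw [cons_eq_smul, ← mul_smul, ← MonoidHom.map_mul]
    have hlen : (cons m' w' h1 h2).toList.length = w'.toList.length + 1 := by simp [cons]
    rw [e, hlen]
    by_cases hmm : m * m' = 1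
    · rw [hmm, MonoidHom.map_one, one_smul]
      omega
    · rw [of_smul_eq_cons _ hmm _ h1]
      simp [cons]

theorem center_coprodI_eq_bot [∀ i, Nontrivial (M i)]
    (hι : ∀ i : ι, ∃ j, j ≠ i) :
    Subgroup.center (CoprodI M) = ⊥ := by
  rw [eq_bot_iff]
  intro z hz
  rw [Subgroup.mem_bot]
  by_contra hz1
  set w : Word M := Word.equiv z with hw
  have hprod : w.prod = z := (Word.equiv (M := M)).symm_apply_apply z
  have hwne : w.toList ≠ [] := by
    intro hnil
    apply hz1
    rw [← hprod, Word.prod, hnil]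
    simp
  obtain ⟨⟨i, x⟩, L', hL⟩ := List.exists_cons_of_ne_nil hwne
  have hfst : fstIdx w = some i := by rw [fstIdx, hL]; rfl
  obtain ⟨k, hk⟩ := hι i
  obtain ⟨m, hm⟩ := exists_ne (1 : M k)
  have hcomm : of m * z = z * of m := Subgroup.mem_center_iff.1 hz (of m)
  have hfstne : fstIdx w ≠ some k := by
    rw [hfst]; exact fun hc => hk (Option.some_injective _ hc).symm
  have hleft : Word.equiv (of m * z) = cons m w hfstne hm := by
    rw [equiv_mul, ← hw, of_smul_eq_cons m hm w hfstne]
  have hright : Word.equiv (of m * z) = wordInv (of m⁻¹ • wordInv w) := by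
    rw [hcomm, show z * of m = (of m⁻¹ * z⁻¹)⁻¹ by simp [mul_inv_rev],
      equiv_inv, equiv_mul, equiv_inv, ← hw]
  by_cases hkv : fstIdx (wordInv w) = some k
  · have h1 : (Word.equiv (of m * z)).toList.length = w.toList.length + 1 := by
      rw [hleft]; simp [cons]
    have h2 : (Word.equiv (of m * z)).toList.length ≤ w.toList.length := by
      rw [hright, length_wordInv]
      calc (of m⁻¹ • wordInv w).toList.length ≤ (wordInv w).toList.length :=
            length_of_smul_le m⁻¹ (wordInv w) hkv
        _ = w.toList.length := length_wordInv w
    omega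
  · have hm' : (m⁻¹ : M k) ≠ 1 := inv_ne_one.2 hm
    have hright2 : Word.equiv (of m * z) = wordInv (cons m⁻¹ (wordInv w) hkv hm') := by
      rw [hright, of_smul_eq_cons m⁻¹ hm' (wordInv w) hkv]
    have hlist : (⟨k, m⟩ : Σ i, M i) :: w.toList = w.toList ++ [⟨k, m⟩] := by
      have e1 := congrArg (fun u => Word.toList u) hleft
      have e2 := congrArg (fun u => Word.toList u) hright2
      rw [e1] at e2
      have : (cons m w hfstne hm).toList = (⟨k, m⟩ : Σ i, M i) :: w.toList := by simp [cons]
      rw [this] at e2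
      convert e2 using 1
      rw [wordInv_toList, cons]
      simp only [List.map_cons, List.reverse_cons]
      rw [← wordInv_toList, wordInv_wordInv_toList]
      simp
    rw [hL, List.cons_append] at hlist
    have h2 : (⟨k, m⟩ : Σ i, M i) = ⟨i, x⟩ := by injection hlist
    exact hk (congrArg Sigma.fst h2)

end CenterAux

end WordAux

/-- hom from `Multiplicative (ZMod n)` determined by an element whose `n`-th power is 1 -/
noncomputable def zmodHom {K : Type*} [Group K] (n : ℕ) (g : K) (h : g ^ n = 1) :
    Multiplicative (ZMod n) →* K :=
  AddMonoidHom.toMultiplicativeLeft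
    (ZMod.lift n ⟨MonoidHom.toAdditiveRight ((zpowersHom K g).comp
        (AddMonoidHom.toMultiplicative (AddMonoidHom.id ℤ))), by
      show g ^ (n : ℤ) = (1 : K)
      rw [zpow_natCast, h]⟩)

theorem zmodHom_intCast {K : Type*} [Group K] (n : ℕ) (g : K) (h : g ^ n = 1) (x : ℤ) :
    zmodHom n g h (Multiplicative.ofAdd ((x : ZMod n))) = g ^ x := by
  simp only [zmodHom, AddMonoidHom.coe_toMultiplicativeLeft, Function.comp_apply, toAdd_ofAdd,
    ZMod.lift_coe]
  rfl

theorem zmodHom_one {K : Type*} [Group K] (n : ℕ) (g : K) (h : g ^ n = 1) :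
    zmodHom n g h (Multiplicative.ofAdd (1 : ZMod n)) = g := by
  have := zmodHom_intCast n g h 1
  simpa using this

section Main

variable (p q : ℕ)

/-- the two factor groups -/
abbrev MF : Bool → Type := fun i => Multiplicative (ZMod (cond i p q))

/-- generators of the factors -/
def sigF : ∀ i, MF p q i := fun _ => Multiplicative.ofAdd 1

/-- the generator images in the free product -/
def fF : Bool → Monoid.CoprodI (MF p q) := fun i => Monoid.CoprodI.of (sigF p q i)

theorem sigF_pow_true : sigF p q true ^ p = 1 := by
  show Multiplicative.ofAdd (1 : ZMod p) ^ p = 1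
  rw [← ofAdd_nsmul, nsmul_eq_mul, mul_one, ZMod.natCast_self]
  rfl

theorem sigF_pow_false : sigF p q false ^ q = 1 := by
  show Multiplicative.ofAdd (1 : ZMod q) ^ q = 1
  rw [← ofAdd_nsmul, nsmul_eq_mul, mul_one, ZMod.natCast_self]
  rfl

/-- the single relation -/
abbrev RelS : Set (FreeGroup Bool) := {FreeGroup.of true ^ p * FreeGroup.of false ^ q}

/-- the two relations -/
abbrev RelT : Set (FreeGroup Bool) := {FreeGroup.of true ^ p, FreeGroup.of false ^ q}

theorem liftf_rels : ∀ r ∈ RelS p q, FreeGroup.lift (fF p q) r = 1 := by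
  intro r hr
  rw [Set.mem_singleton_iff] at hr
  subst hr
  rw [map_mul, map_pow, map_pow, FreeGroup.lift_apply_of, FreeGroup.lift_apply_of, fF, fF,
    ← map_pow, ← map_pow, sigF_pow_true, sigF_pow_false, map_one, one_mul, map_one]

/-- the projection to the free product of cyclic groups -/
noncomputable def phiF : PresentedGroup (RelS p q) →* Monoid.CoprodI (MF p q) :=
  PresentedGroup.toGroup (liftf_rels p q)

theorem phiF_of (i : Bool) : phiF p q (PresentedGroup.of i) = Monoid.CoprodI.of (sigF p q i) :=
  PresentedGroup.toGroup.of (liftf_rels p q)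

theorem phiF_surjective [NeZero p] [NeZero q] : Function.Surjective (phiF p q) := by
  intro c
  induction c using Monoid.CoprodI.induction_on with
  | one => exact ⟨1, map_one _⟩
  | of i m =>
    haveI : NeZero (cond i p q) := by cases i <;> assumption
    refine ⟨(PresentedGroup.of i) ^ (Multiplicative.toAdd m).val, ?_⟩
    rw [map_pow, phiF_of, ← map_pow]
    congr 1
    show Multiplicative.ofAdd (1 : ZMod (cond i p q)) ^ (Multiplicative.toAdd m).val = m
    rw [← ofAdd_nsmul, nsmul_eq_mul, mul_one,
      ZMod.natCast_rightInverse (Multiplicative.toAdd m)]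
    rfl
  | mul x y hx hy =>
    obtain ⟨gx, hgx⟩ := hx
    obtain ⟨gy, hgy⟩ := hy
    exact ⟨gx * gy, by rw [map_mul, hgx, hgy]⟩

theorem relT_pow_true : (PresentedGroup.of true : PresentedGroup (RelT p q)) ^ p = 1 := by
  have h1 : PresentedGroup.mk (RelT p q) (FreeGroup.of true ^ p) = 1 :=
    (QuotientGroup.eq_one_iff _).2 (Subgroup.subset_normalClosure (by simp))
  rw [map_pow] at h1
  exact h1

theorem relT_pow_false : (PresentedGroup.of false : PresentedGroup (RelT p q)) ^ q = 1 := by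
  have h1 : PresentedGroup.mk (RelT p q) (FreeGroup.of false ^ q) = 1 :=
    (QuotientGroup.eq_one_iff _).2 (Subgroup.subset_normalClosure (by simp))
  rw [map_pow] at h1
  exact h1

/-- maps from the factors to the two-relator presented group -/
noncomputable def cF : ∀ i, MF p q i →* PresentedGroup (RelT p q) := fun i =>
  match i with
  | true => zmodHom p _ (relT_pow_true p q)
  | false => zmodHom q _ (relT_pow_false p q)

noncomputable def chiF : Monoid.CoprodI (MF p q) →* PresentedGroup (RelT p q) :=
  Monoid.CoprodI.lift (cF p q)

theorem chiF_liftf (w : FreeGroup Bool) :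
    chiF p q (FreeGroup.lift (fF p q) w) = PresentedGroup.mk (RelT p q) w := by
  have h : ((chiF p q).comp (FreeGroup.lift (fF p q))) = PresentedGroup.mk (RelT p q) := by
    apply FreeGroup.ext_hom
    intro i
    simp only [MonoidHom.comp_apply, FreeGroup.lift_apply_of]
    cases i with
    | true =>
      show chiF p q (Monoid.CoprodI.of (sigF p q true)) = PresentedGroup.of true
      rw [chiF, Monoid.CoprodI.lift_of]
      exact zmodHom_one p _ (relT_pow_true p q)
    | false =>
      show chiF p q (Monoid.CoprodI.of (sigF p q false)) = PresentedGroup.of false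
      rw [chiF, Monoid.CoprodI.lift_of]
      exact zmodHom_one q _ (relT_pow_false p q)
  exact DFunLike.congr_fun h w

theorem mem_normalClosure_of_lift_eq_one (w : FreeGroup Bool)
    (h : FreeGroup.lift (fF p q) w = 1) :
    w ∈ Subgroup.normalClosure (RelT p q) := by
  have h2 : PresentedGroup.mk (RelT p q) w = 1 := by rw [← chiF_liftf, h, map_one]
  exact (QuotientGroup.eq_one_iff w).1 h2

end Main

/-- In the group with two generators `a, b` and the single defining relation
`a ^ p * b ^ q = 1` (`p, q ≥ 2`), the center is exactly the subgroup generated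
by `a ^ p`. -/
theorem center_presentedGroup_one_relator (p q : ℕ) (hp : 2 ≤ p) (hq : 2 ≤ q) :
    Subgroup.center
        (PresentedGroup
          ({FreeGroup.of true ^ p * FreeGroup.of false ^ q} : Set (FreeGroup Bool))) =
      Subgroup.closure
        {(PresentedGroup.of true :
          PresentedGroup
            ({FreeGroup.of true ^ p * FreeGroup.of false ^ q} : Set (FreeGroup Bool))) ^ p} := by
  classical
  haveI : Fact (1 < p) := ⟨by omega⟩
  haveI : Fact (1 < q) := ⟨by omega⟩
  haveI : NeZero p := ⟨by omega⟩
  haveI : NeZero q := ⟨by omega⟩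
  haveI hMnt : ∀ i, Nontrivial (MF p q i) := fun i => by
    haveI : Fact (1 < cond i p q) := by cases i <;> assumption
    obtain ⟨x, y, hxy⟩ := exists_pair_ne (ZMod (cond i p q))
    exact ⟨Multiplicative.ofAdd x, Multiplicative.ofAdd y, fun h => hxy (by simpa using h)⟩
  show Subgroup.center (PresentedGroup (RelS p q)) =
    Subgroup.closure {(PresentedGroup.of true : PresentedGroup (RelS p q)) ^ p}
  set a : PresentedGroup (RelS p q) := PresentedGroup.of true with ha
  set b : PresentedGroup (RelS p q) := PresentedGroup.of false with hb
  -- the relation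
  have hrelG : a ^ p * b ^ q = 1 := by
    have h1 : PresentedGroup.mk (RelS p q) (FreeGroup.of true ^ p * FreeGroup.of false ^ q) = 1 :=
      (QuotientGroup.eq_one_iff _).2 (Subgroup.subset_normalClosure (by simp))
    rw [map_mul, map_pow, map_pow] at h1
    exact h1
  have hbq : b ^ q = (a ^ p)⁻¹ := eq_inv_of_mul_eq_one_right hrelG
  -- a ^ p is central
  have hcenter : a ^ p ∈ Subgroup.center (PresentedGroup (RelS p q)) := by
    rw [Subgroup.mem_center_iff]
    intro g
    have hgen : ∀ g : PresentedGroup (RelS p q), g ∈ Subgroup.centralizer {a ^ p} := by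
      intro g
      refine PresentedGroup.generated_by (RelS p q) _ ?_ g
      intro j
      rw [Subgroup.mem_centralizer_iff]
      intro h hh
      rw [Set.mem_singleton_iff] at hh
      subst hh
      cases j with
      | true =>
        show a ^ p * a = a * a ^ p
        rw [← pow_succ, ← pow_succ']
      | false =>
        show a ^ p * b = b * a ^ p
        rw [show a ^ p = (b ^ q)⁻¹ from by rw [hbq, inv_inv]]
        exact (((Commute.refl b).pow_right q).inv_right).eq.symm
    exact (Subgroup.mem_centralizer_iff.1 (hgen g) (a ^ p) rfl).symm
  have easy : Subgroup.closure {a ^ p} ≤ Subgroup.center (PresentedGroup (RelS p q)) :=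
    (Subgroup.closure_le _).2 (Set.singleton_subset_iff.2 hcenter)
  have hclosnormal : (Subgroup.closure {a ^ p}).Normal := by
    constructor
    intro n hn g
    have hncen : n ∈ Subgroup.center _ := easy hn
    have : g * n * g⁻¹ = n := by
      rw [Subgroup.mem_center_iff.1 hncen g, mul_assoc, mul_inv_cancel, mul_one]
    rwa [this]
  have hnceq : Subgroup.normalClosure {a ^ p} = Subgroup.closure {a ^ p} :=
    le_antisymm (Subgroup.normalClosure_le_normal Subgroup.subset_closure)
      ((Subgroup.closure_le _).2 Subgroup.subset_normalClosure)
  -- kernel of phi is contained in the closure of a ^ p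
  have hker : ∀ z : PresentedGroup (RelS p q), phiF p q z = 1 →
      z ∈ Subgroup.closure {a ^ p} := by
    intro z hz
    obtain ⟨w, rfl⟩ := PresentedGroup.mk_surjective (RelS p q) z
    have hl : FreeGroup.lift (fF p q) w = 1 := hz
    have hw : w ∈ Subgroup.normalClosure (RelT p q) :=
      mem_normalClosure_of_lift_eq_one p q w hl
    haveI : (Subgroup.comap (PresentedGroup.mk (RelS p q))
        (Subgroup.normalClosure {a ^ p})).Normal :=
      (Subgroup.normalClosure_normal).comap _
    have hle : Subgroup.normalClosure (RelT p q) ≤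
        Subgroup.comap (PresentedGroup.mk (RelS p q)) (Subgroup.normalClosure {a ^ p}) := by
      apply Subgroup.normalClosure_le_normal
      intro r hr
      simp only [Set.mem_insert_iff, Set.mem_singleton_iff] at hr
      rcases hr with rfl | rfl
      · rw [SetLike.mem_coe, Subgroup.mem_comap, map_pow]
        exact Subgroup.subset_normalClosure rfl
      · rw [SetLike.mem_coe, Subgroup.mem_comap, map_pow]
        have : (PresentedGroup.mk (RelS p q) (FreeGroup.of false)) ^ q = (a ^ p)⁻¹ := hbq
        rw [this]
        exact (Subgroup.normalClosure {a ^ p}).inv_mem (Subgroup.subset_normalClosure rfl)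
    have hthis := hle hw
    rw [Subgroup.mem_comap, hnceq] at hthis
    exact hthis
  -- conclusion
  refine le_antisymm ?_ easy
  intro z hz
  apply hker
  have hzc : phiF p q z ∈ Subgroup.center (Monoid.CoprodI (MF p q)) := by
    rw [Subgroup.mem_center_iff]
    intro c
    obtain ⟨g, rfl⟩ := phiF_surjective p q c
    rw [← map_mul, ← map_mul, Subgroup.mem_center_iff.1 hz g]
  rw [CenterAux.center_coprodI_eq_bot (fun i => ⟨!i, by cases i <;> simp⟩)] at hzc
  exact Subgroup.mem_bot.1 hzc
end

section
/- The modular group (projective, i.e. modulo ±1) is the group with two generators S₁, S₂ and defining relations S₁³ = 1, S₂² = 1, and no others; equivalently, PSL(2, ℤ) is isomorphic to the free product of a cyclic group of order 3 and a cyclic group of order 2. Precisely: the quotient of Matrix.SpecialLinearGroup (Fin 2) ℤ by its center is isomorphic as a group to Monoid.Coprod (Multiplicative (ZMod 3)) (Multiplicative (ZMod 2)). -/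
open Matrix ModularGroup Matrix.SpecialLinearGroup UpperHalfPlane Complex Monoid

local notation "SL2Z" => Matrix.SpecialLinearGroup (Fin 2) ℤ

section Generation

lemma sl2z_det (g : SL2Z) : g 0 0 * g 1 1 - g 0 1 * g 1 0 = 1 := by
  have := g.2
  rwa [Matrix.det_fin_two] at this

lemma mul_entry (A B : SL2Z) (i j : Fin 2) :
    (A * B) i j = A i 0 * B 0 j + A i 1 * B 1 j := by
  show ((A * B : SL2Z) : Matrix (Fin 2) (Fin 2) ℤ) i j = _
  rw [Matrix.SpecialLinearGroup.coe_mul, Matrix.mul_apply, Fin.sum_univ_two]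

lemma T_zpow_entry (n : ℤ) (i j : Fin 2) :
    (T ^ n) i j = !![1, n; 0, 1] i j := by
  show ((T ^ n : SL2Z) : Matrix (Fin 2) (Fin 2) ℤ) i j = _
  rw [coe_T_zpow]

lemma S_entry (i j : Fin 2) : S i j = !![0, -1; 1, 0] i j := rfl

lemma closure_S_T : Subgroup.closure ({S, T} : Set SL2Z) = ⊤ := by
  rw [eq_top_iff]
  intro g _
  set K := Subgroup.closure ({S, T} : Set SL2Z) with hK
  have hS : S ∈ K := Subgroup.subset_closure (by simp)
  have hT : T ∈ K := Subgroup.subset_closure (by simp)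
  have hTz : ∀ n : ℤ, T ^ n ∈ K := fun n => K.zpow_mem hT n
  suffices H : ∀ m : ℕ, ∀ g : SL2Z, (g 1 0).natAbs = m → g ∈ K by
    exact H (g 1 0).natAbs g rfl
  intro m
  induction m using Nat.strong_induction_on with
  | _ m ih =>
    intro g hg
    rcases eq_or_ne (g 1 0) 0 with hc | hc
    · have hdet := sl2z_det g
      rw [hc, mul_zero, sub_zero] at hdet
      rcases Int.eq_one_or_neg_one_of_mul_eq_one' hdet with ⟨h1, h2⟩ | ⟨h1, h2⟩
      · have heta : (g : Matrix (Fin 2) (Fin 2) ℤ) = !![g 0 0, g 0 1; g 1 0, g 1 1] :=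
          Matrix.eta_fin_two _
        have : g = T ^ (g 0 1) := by
          apply Subtype.ext
          conv_lhs => rw [heta, h1, h2, hc]
          rw [coe_T_zpow]
        rw [this]; exact hTz _
      · have heta : (g : Matrix (Fin 2) (Fin 2) ℤ) = !![g 0 0, g 0 1; g 1 0, g 1 1] :=
          Matrix.eta_fin_two _
        have : g = S * S * T ^ (-(g 0 1)) := by
          apply Subtype.ext
          conv_lhs => rw [heta, h1, h2, hc]
          rw [Matrix.SpecialLinearGroup.coe_mul, Matrix.SpecialLinearGroup.coe_mul,
            coe_S, coe_T_zpow]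
          norm_num [Matrix.mul_fin_two]
        rw [this]
        exact K.mul_mem (K.mul_mem hS hS) (hTz _)
    · set a := g 0 0 with ha
      set c := g 1 0 with hcc
      set n := -(a / c) with hn
      have key : (S * (T ^ n * g)) 1 0 = a % c := by
        rw [mul_entry, mul_entry, mul_entry, S_entry, S_entry, T_zpow_entry, T_zpow_entry]
        simp [Matrix.cons_val_zero, Matrix.cons_val_one]
        rw [hn, Int.emod_def]
        ring
      have hlt : ((S * (T ^ n * g)) 1 0).natAbs < m := by
        rw [key]
        have h1 : 0 ≤ a % c := Int.emod_nonneg a hc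
        have h2 : a % c < (c.natAbs : ℤ) := by
          rcases lt_or_gt_of_ne hc with h | h
          · have := Int.emod_lt_of_pos a (by omega : (0:ℤ) < -c)
            rw [Int.emod_neg] at this
            omega
          · have := Int.emod_lt_of_pos a h
            omega
        omega
      have hmem : S * (T ^ n * g) ∈ K := ih _ hlt _ rfl
      have : g = T ^ (-n) * (S⁻¹ * (S * (T ^ n * g))) := by group
      rw [this]
      exact K.mul_mem (hTz _) (K.mul_mem (K.inv_mem hS) hmem)

end Generation

section CoprodEquiv

universe u
variable {M N : Type u} [Group M] [Group N]

/-- The Bool-indexed family for the binary coproduct. -/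
abbrev boolFam (M N : Type u) : Bool → Type u := fun b => cond b M N

instance (b : Bool) : Group (boolFam M N b) := by cases b <;> dsimp [boolFam] <;> infer_instance

def coprodToCoprodI : Coprod M N →* CoprodI (boolFam M N) :=
  Coprod.lift ((CoprodI.of : boolFam M N true →* CoprodI (boolFam M N)))
    ((CoprodI.of : boolFam M N false →* CoprodI (boolFam M N)))

def coprodIToCoprod : CoprodI (boolFam M N) →* Coprod M N :=
  CoprodI.lift (fun b => match b with
    | true => Coprod.inl
    | false => Coprod.inr)

def coprodMulEquivCoprodI : Coprod M N ≃* CoprodI (boolFam M N) := by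
  refine MulEquiv.mk ⟨coprodToCoprodI, coprodIToCoprod, ?_, ?_⟩ (map_mul _)
  · intro x
    have h : (coprodIToCoprod.comp (coprodToCoprodI : Coprod M N →* _)) =
        MonoidHom.id _ := by
      apply Coprod.hom_ext
      · ext m
        simp only [MonoidHom.comp_apply, MonoidHom.id_apply, coprodToCoprodI, coprodIToCoprod,
          Coprod.lift_apply_inl]
        exact CoprodI.lift_of _ _
      · ext n
        simp only [MonoidHom.comp_apply, MonoidHom.id_apply, coprodToCoprodI, coprodIToCoprod,
          Coprod.lift_apply_inr]
        exact CoprodI.lift_of _ _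
    exact DFunLike.congr_fun h x
  · intro x
    have h : ((coprodToCoprodI : Coprod M N →* _).comp coprodIToCoprod) =
        MonoidHom.id _ := by
      apply CoprodI.ext_hom
      intro i
      cases i <;> ext m <;>
        · simp only [MonoidHom.comp_apply, MonoidHom.id_apply, coprodToCoprodI, coprodIToCoprod]
          rw [CoprodI.lift_of]
          rfl
    exact DFunLike.congr_fun h x

end CoprodEquiv

section GenHom

variable {G : Type*} [Group G]

/-- Hom from `Multiplicative (ZMod n)` sending the generator to `g`, given `g ^ n = 1`. -/
def genHom {n : ℕ} [NeZero n] (g : G) (h : g ^ n = 1) : Multiplicative (ZMod n) →* G where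
  toFun x := g ^ (Multiplicative.toAdd x).val
  map_one' := by simp
  map_mul' x y := by
    show g ^ (Multiplicative.toAdd x + Multiplicative.toAdd y).val = _
    rw [ZMod.val_add, ← pow_eq_pow_mod _ h, pow_add]

lemma genHom_apply {n : ℕ} [NeZero n] (g : G) (h : g ^ n = 1) (x : Multiplicative (ZMod n)) :
    genHom g h x = g ^ (Multiplicative.toAdd x).val := rfl

end GenHom

section HalfPlane

lemma coe_S_smul (z : ℍ) : ((S • z : ℍ) : ℂ) = (-(z:ℂ))⁻¹ := by
  rw [modular_S_smul]

lemma coe_TS_smul (z : ℍ) : (((T * S) • z : ℍ) : ℂ) = 1 + (-(z:ℂ))⁻¹ := by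
  rw [mul_smul, modular_T_smul]
  rw [UpperHalfPlane.coe_vadd, coe_S_smul]
  norm_num

lemma z_ne_zero (z : ℍ) : (z : ℂ) ≠ 0 := UpperHalfPlane.ne_zero z

lemma re_S_smul (z : ℍ) : (S • z : ℍ).re = -z.re / normSq (z:ℂ) := by
  have : (S • z : ℍ).re = ((-(z:ℂ))⁻¹).re := by
    rw [UpperHalfPlane.re, coe_S_smul]
  rw [this, inv_re, normSq_neg, neg_re]
  rfl

lemma re_TS_smul (z : ℍ) : ((T * S) • z : ℍ).re = 1 + -z.re / normSq (z:ℂ) := by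
  have : ((T * S) • z : ℍ).re = (1 + (-(z:ℂ))⁻¹).re := by
    rw [UpperHalfPlane.re, coe_TS_smul]
  rw [this, add_re, one_re, inv_re, normSq_neg, neg_re]
  rfl

lemma normSq_pos' (z : ℍ) : 0 < normSq (z:ℂ) := normSq_pos.mpr (z_ne_zero z)

lemma F1 {z : ℍ} (h : 0 < z.re) : (S • z : ℍ).re < 0 := by
  rw [re_S_smul]
  exact div_neg_of_neg_of_pos (by linarith) (normSq_pos' z)

lemma F2 {z : ℍ} (h : z.re < 0) : 0 < ((T * S) • z : ℍ).re := by
  rw [re_TS_smul]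
  have := normSq_pos' z
  have : 0 < -z.re / normSq (z:ℂ) := div_pos (by linarith) this
  linarith

lemma F2' {z : ℍ} (h : z.re < 0) : 1 < ((T * S) • z : ℍ).re := by
  rw [re_TS_smul]
  have := normSq_pos' z
  have : 0 < -z.re / normSq (z:ℂ) := div_pos (by linarith) this
  linarith

lemma F3 {z : ℍ} (h : z.re < 0) : 0 < (((T * S) * (T * S)) • z : ℍ).re := by
  rw [mul_smul, re_TS_smul]
  set w : ℍ := (T * S) • z with hw
  have h1 : 1 < w.re := F2' h
  have h2 : 0 < normSq (w:ℂ) := normSq_pos' w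
  have h3 : w.re ^ 2 ≤ normSq (w:ℂ) := by
    rw [normSq_apply]
    have : (0:ℝ) ≤ (w:ℂ).im * (w:ℂ).im := mul_self_nonneg _
    have hre : (w:ℂ).re = w.re := rfl
    nlinarith [this]
  have h4 : w.re < normSq (w:ℂ) := by nlinarith
  have : w.re / normSq (w:ℂ) < 1 := (div_lt_one h2).mpr h4
  have hneg : -w.re / normSq (w:ℂ) = -(w.re / normSq (w:ℂ)) := by ring
  rw [hneg]
  linarith

end HalfPlane

section Center

lemma neg_one_mem_center {x : SL2Z} (hx : (x : Matrix (Fin 2) (Fin 2) ℤ) = -1) :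
    x ∈ Subgroup.center SL2Z := by
  rw [Matrix.SpecialLinearGroup.mem_center_iff]
  refine ⟨-1, by norm_num, ?_⟩
  rw [hx]
  simp

lemma TS_cube : (((T * S) ^ 3 : SL2Z) : Matrix (Fin 2) (Fin 2) ℤ) = -1 := by
  have h1 : ((T * S : SL2Z) : Matrix (Fin 2) (Fin 2) ℤ) = !![1, -1; 1, 0] := by
    rw [Matrix.SpecialLinearGroup.coe_mul, coe_T, coe_S]
    norm_num [Matrix.mul_fin_two]
  have : (((T * S) ^ 3 : SL2Z) : Matrix (Fin 2) (Fin 2) ℤ) =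
      !![1, -1; 1, 0] * (!![1, -1; 1, 0] * !![1, -1; 1, 0]) := by
    rw [pow_succ, pow_succ, pow_one, Matrix.SpecialLinearGroup.coe_mul,
      Matrix.SpecialLinearGroup.coe_mul, h1]
    rw [mul_assoc]
  rw [this]
  norm_num [Matrix.mul_fin_two]
  rw [Matrix.eta_fin_two (-1 : Matrix (Fin 2) (Fin 2) ℤ)]
  norm_num

lemma S_sq : ((S ^ 2 : SL2Z) : Matrix (Fin 2) (Fin 2) ℤ) = -1 := by
  rw [pow_two, Matrix.SpecialLinearGroup.coe_mul]
  exact S_mul_S_eq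

lemma center_smul_trivial {x : SL2Z} (hx : x ∈ Subgroup.center SL2Z) (z : ℍ) : x • z = z := by
  obtain ⟨r, hr2, hrs⟩ := Matrix.SpecialLinearGroup.mem_center_iff.mp hx
  rw [Fintype.card_fin] at hr2
  have hr : r = 1 ∨ r = -1 := by
    have : r * r = 1 := by rw [← pow_two]; exact hr2
    rcases Int.eq_one_or_neg_one_of_mul_eq_one' this with ⟨h, _⟩ | ⟨h, _⟩
    · exact Or.inl h
    · exact Or.inr h
  have e00 : x 0 0 = r := by
    rw [← congr_fun₂ hrs 0 0, Matrix.scalar_apply, Matrix.diagonal_apply_eq]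
  have e01 : x 0 1 = 0 := by
    rw [← congr_fun₂ hrs 0 1, Matrix.scalar_apply, Matrix.diagonal_apply_ne _ (by decide)]
  have e10 : x 1 0 = 0 := by
    rw [← congr_fun₂ hrs 1 0, Matrix.scalar_apply, Matrix.diagonal_apply_ne _ (by decide)]
  have e11 : x 1 1 = r := by
    rw [← congr_fun₂ hrs 1 1, Matrix.scalar_apply, Matrix.diagonal_apply_eq]
  have hr0 : ((r : ℝ) : ℂ) ≠ 0 := by
    rcases hr with h | h <;> rw [h] <;> norm_num
  apply UpperHalfPlane.ext
  rw [UpperHalfPlane.specialLinearGroup_apply]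
  show (((algebraMap ℤ ℝ (x 0 0) : ℂ)) * z + (algebraMap ℤ ℝ (x 0 1) : ℂ)) /
      (((algebraMap ℤ ℝ (x 1 0) : ℂ)) * z + (algebraMap ℤ ℝ (x 1 1) : ℂ)) = (z : ℂ)
  rw [e00, e01, e10, e11]
  have halg : (algebraMap ℤ ℝ) r = (r : ℝ) := by simp
  have halg0 : (algebraMap ℤ ℝ) (0 : ℤ) = (0 : ℝ) := by simp
  rw [halg, halg0]
  simp only [Complex.ofReal_zero, zero_mul, add_zero, zero_add]
  rw [mul_comm, mul_div_assoc, div_self hr0, mul_one]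

end Center

section Assembly

local notation "Q" => SL2Z ⧸ Subgroup.center SL2Z

noncomputable def πq : SL2Z →* Q := QuotientGroup.mk' _

noncomputable def ρ : Q →* Equiv.Perm ℍ :=
  QuotientGroup.lift (Subgroup.center SL2Z) (MulAction.toPermHom SL2Z ℍ)
    (fun x hx => Equiv.ext fun z => center_smul_trivial hx z)

noncomputable instance : MulAction Q ℍ := MulAction.compHom ℍ ρ

lemma q_smul (m : SL2Z) (z : ℍ) : (πq m) • z = m • z := rfl

lemma h3 : (πq (T * S)) ^ 3 = 1 := by
  rw [← map_pow, πq, QuotientGroup.mk'_apply, QuotientGroup.eq_one_iff]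
  exact neg_one_mem_center TS_cube

lemma h2 : (πq S) ^ 2 = 1 := by
  rw [← map_pow, πq, QuotientGroup.mk'_apply, QuotientGroup.eq_one_iff]
  exact neg_one_mem_center S_sq

noncomputable abbrev fA : Multiplicative (ZMod 3) →* Q := genHom _ h3
noncomputable abbrev fB : Multiplicative (ZMod 2) →* Q := genHom _ h2

noncomputable def fam : ∀ b : Bool,
    boolFam (Multiplicative (ZMod 3)) (Multiplicative (ZMod 2)) b →* Q := fun b =>
  match b with
  | true => fA
  | false => fB

noncomputable def ψ : CoprodI (boolFam (Multiplicative (ZMod 3)) (Multiplicative (ZMod 2))) →* Q :=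
  CoprodI.lift fam

def Xpp : Bool → Set ℍ := fun b => cond b {z | 0 < z.re} {z | z.re < 0}

lemma psi_injective : Function.Injective ψ := by
  unfold ψ
  apply CoprodI.lift_injective_of_ping_pong fam _ Xpp
  · -- nonempty
    intro i
    cases i
    · refine ⟨UpperHalfPlane.mk (-1 + Complex.I) (by simp), ?_⟩
      show (-1 + Complex.I).re < 0
      norm_num
    · refine ⟨UpperHalfPlane.mk (1 + Complex.I) (by simp), ?_⟩
      show (0:ℝ) < (1 + Complex.I).re
      norm_num
  · -- disjoint
    intro i j hij
    cases i <;> cases j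
    · exact absurd rfl hij
    · exact Set.disjoint_left.mpr fun z hz hz' => by
        simp only [Xpp, Set.mem_setOf_eq, cond] at hz hz'; linarith
    · exact Set.disjoint_left.mpr fun z hz hz' => by
        simp only [Xpp, Set.mem_setOf_eq, cond] at hz hz'; linarith
    · exact absurd rfl hij
  · -- ping pong
    intro i j hij
    cases i <;> cases j <;> try exact absurd rfl hij
    · -- i = false (C2), j = true
      intro h hne
      change Multiplicative (ZMod 2) at h
      rintro _ ⟨z, hz, rfl⟩
      simp only [Xpp, cond, Set.mem_setOf_eq] at hz ⊢
      have hval : (Multiplicative.toAdd h).val = 1 := by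
        have h1 : (Multiplicative.toAdd h) ≠ 0 := by
          simpa using hne
        have := ZMod.val_lt (Multiplicative.toAdd h)
        have h0 : (Multiplicative.toAdd h).val ≠ 0 := by
          simpa [ZMod.val_eq_zero] using h1
        omega
      show ((fam false) h • z).re < 0
      have : (fam false) h = πq S := by
        show fB h = πq S
        rw [genHom_apply, hval, pow_one]
      rw [this, q_smul]
      exact F1 hz
    · -- i = true (C3), j = false
      intro h hne
      change Multiplicative (ZMod 3) at h
      rintro _ ⟨z, hz, rfl⟩
      simp only [Xpp, cond, Set.mem_setOf_eq] at hz ⊢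
      have h1 : (Multiplicative.toAdd h) ≠ 0 := by simpa using hne
      have hlt := ZMod.val_lt (Multiplicative.toAdd h)
      have h0 : (Multiplicative.toAdd h).val ≠ 0 := by
        simpa [ZMod.val_eq_zero] using h1
      show 0 < ((fam true) h • z).re
      have hfam : (fam true) h = πq (T * S) ^ (Multiplicative.toAdd h).val := by
        show fA h = _
        rw [genHom_apply]
      rcases (by omega : (Multiplicative.toAdd h).val = 1 ∨ (Multiplicative.toAdd h).val = 2)
        with hv | hv
      · rw [hfam, hv, pow_one, q_smul]
        exact F2 hz
      · rw [hfam, hv, pow_two, ← _root_.map_mul, q_smul]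
        exact F3 hz
  · -- cardinality
    right
    refine ⟨true, ?_⟩
    rw [show (boolFam (Multiplicative (ZMod 3)) (Multiplicative (ZMod 2)) true) =
      Multiplicative (ZMod 3) from rfl, Cardinal.mk_fintype]
    norm_num

lemma psi_range : ψ.range = ⊤ := by
  have hS : πq S ∈ ψ.range := by
    refine ⟨CoprodI.of (i := false) (Multiplicative.ofAdd (1 : ZMod 2)), ?_⟩
    rw [ψ]; erw [CoprodI.lift_of]
    show fB (Multiplicative.ofAdd (1 : ZMod 2)) = πq S
    rw [genHom_apply]
    norm_num [ZMod.val_one]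
  have hTS : πq (T * S) ∈ ψ.range := by
    refine ⟨CoprodI.of (i := true) (Multiplicative.ofAdd (1 : ZMod 3)), ?_⟩
    rw [ψ]; erw [CoprodI.lift_of]
    show fA (Multiplicative.ofAdd (1 : ZMod 3)) = πq (T * S)
    rw [genHom_apply]
    norm_num [ZMod.val_one]
  have hT : πq T ∈ ψ.range := by
    have : πq T = πq (T * S) * (πq S)⁻¹ := by
      rw [← _root_.map_inv, ← _root_.map_mul]
      congr 1
      group
    rw [this]
    exact mul_mem hTS (inv_mem hS)
  have hsurjq : Function.Surjective πq := QuotientGroup.mk'_surjective _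
  have htop : Subgroup.closure (πq '' {S, T}) = ⊤ := by
    rw [← MonoidHom.map_closure, closure_S_T]
    exact Subgroup.map_top_of_surjective _ hsurjq
  rw [eq_top_iff, ← htop, Subgroup.closure_le]
  rintro x ⟨y, hy, rfl⟩
  rcases hy with rfl | rfl
  · exact hS
  · exact hT

lemma psi_surjective : Function.Surjective ψ := by
  intro y
  have : y ∈ ψ.range := psi_range ▸ Subgroup.mem_top y
  exact MonoidHom.mem_range.mp this

end Assembly

/-- The projective modular group `PSL(2, ℤ)`, the quotient of `SL(2, ℤ)` by its
center `{±1}`, is isomorphic to the free product of cyclic groups of orders 3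
and 2. -/
theorem psl2z_iso_coprod_zmod3_zmod2 :
    Nonempty
      ((Matrix.SpecialLinearGroup (Fin 2) ℤ ⧸
          Subgroup.center (Matrix.SpecialLinearGroup (Fin 2) ℤ)) ≃*
        Monoid.Coprod (Multiplicative (ZMod 3)) (Multiplicative (ZMod 2))) := by
  exact ⟨(coprodMulEquivCoprodI.trans
    (MulEquiv.ofBijective ψ ⟨psi_injective, psi_surjective⟩)).symm⟩
end

section
/- Structure theorem for finitely generated commutative groups: every finitely generated abelian group is a direct product of a free abelian group and finitely many finite cyclic groups with successive divisibility. Precisely: if A is a finitely generated additive commutative group, then there exist a natural number n, a natural number s, and natural numbers d₁, …, d_s with each dᵢ ≥ 2 and dᵢ ∣ dᵢ₊₁, such that A is isomorphic (as an additive group) to (Fin n → ℤ) × Π_{i} ZMod dᵢ. -/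
open Finset

/-- `Fin.snocEquiv` as an `AddEquiv`. -/
def snocAddEquiv {s : ℕ} (M : Fin (s + 1) → Type*) [∀ j, AddCommMonoid (M j)] :
    (M (Fin.last s) × ∀ j : Fin s, M j.castSucc) ≃+ ∀ j, M j :=
  (AddEquiv.mk' (Fin.snocEquiv M).symm fun _ _ => rfl).symm

/-- Dropping subsingleton factors from a product. -/
def piSubtypeAddEquiv {ι : Type*} (P : ι → Prop) [DecidablePred P] (M : ι → Type*)
    [∀ i, AddCommMonoid (M i)] (hsub : ∀ i, ¬P i → Subsingleton (M i)) :
    (∀ i, M i) ≃+ ∀ i : { i // P i }, M i where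
  toFun x i := x i
  invFun y i := if h : P i then y ⟨i, h⟩ else 0
  left_inv x := funext fun i => by
    by_cases h : P i
    · simp [h]
    · exact @Subsingleton.elim _ (hsub i h) _ _
  right_inv y := funext fun i => by simp only []; rw [dif_pos i.2]
  map_add' _ _ := rfl

theorem key_lemma : ∀ (N : ℕ) (ι : Type) (_ : Fintype ι), Fintype.card ι ≤ N →
    ∀ (m : ι → ℕ), (∀ i, ∃ q e, Nat.Prime q ∧ 0 < e ∧ m i = q ^ e) →
    ∃ (s : ℕ) (d : Fin s → ℕ),
      (∀ j, 2 ≤ d j) ∧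
      (∀ (i : ℕ) (h1 : i + 1 < s), d ⟨i, Nat.lt_of_succ_lt h1⟩ ∣ d ⟨i + 1, h1⟩) ∧
      (∀ j, d j ∣ Finset.univ.lcm m) ∧
      Nonempty ((∀ i, ZMod (m i)) ≃+ ∀ j, ZMod (d j)) := by
  intro N
  induction N with
  | zero =>
    intro ι fι hcard m _
    haveI : IsEmpty ι := Fintype.card_eq_zero_iff.mp (Nat.le_zero.mp hcard)
    refine ⟨0, fun j => j.elim0, fun j => j.elim0, fun i h1 => by omega, fun j => j.elim0,
      ⟨AddEquiv.mk' (Equiv.ofUnique _ _) fun x y => Subsingleton.elim _ _⟩⟩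
  | succ N IH =>
    intro ι fι hcard m hm
    classical
    rcases isEmpty_or_nonempty ι with hemp | hne
    · refine ⟨0, fun j => j.elim0, fun j => j.elim0, fun i h1 => by omega, fun j => j.elim0,
        ⟨AddEquiv.mk' (Equiv.ofUnique _ _) fun x y => Subsingleton.elim _ _⟩⟩
    -- setup
    have hm2 : ∀ i, 2 ≤ m i := by
      intro i; obtain ⟨q, e, hq, he, hqe⟩ := hm i
      calc 2 ≤ q := hq.two_le
      _ ≤ q ^ e := Nat.le_self_pow he.ne' q
      _ = m i := hqe.symm
    set q : ι → ℕ := fun i => (m i).minFac with hq_def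
    have hq : ∀ i, (q i).Prime := by
      intro i; obtain ⟨p, e, hp, he, hqe⟩ := hm i
      simpa [hq_def, hqe, hp.pow_minFac he.ne'] using hp
    have hqm : ∀ i, ∃ e, 0 < e ∧ m i = q i ^ e := by
      intro i; obtain ⟨p, e, hp, he, hqe⟩ := hm i
      exact ⟨e, he, by rw [hqe]; simp only [hq_def]; rw [hqe, hp.pow_minFac he.ne']⟩
    -- divisibility within a prime class
    have hdvd_class : ∀ i j, q i = q j → m i ≤ m j → m i ∣ m j := by
      intro i j hqq hle
      obtain ⟨e, he, hei⟩ := hqm i; obtain ⟨f, hf, hej⟩ := hqm j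
      rw [hei, hej, ← hqq]
      exact pow_dvd_pow _ ((Nat.pow_le_pow_iff_right (hq i).one_lt).mp
        (by rwa [hei, hej, ← hqq] at hle))
    -- tie-breaking linear order via an injective counter
    set K : ℕ := Fintype.card ι with hK
    set ord : ι → ℕ := fun i => ((Fintype.equivFin ι) i : ℕ) with hord
    have hordK : ∀ i, ord i < K := fun i => ((Fintype.equivFin ι) i).2
    have hordinj : Function.Injective ord := fun i j hij =>
      (Fintype.equivFin ι).injective (Fin.val_injective hij)
    set c : ι → ℕ := fun i => (K + 1) * m i + ord i with hc
    have hcmono : ∀ i j, m i < m j → c i < c j := by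
      intro i j hij
      have hoi := hordK i
      have : (K + 1) * m i + ord i < (K + 1) * (m i + 1) := by
        simp only [Nat.mul_add, Nat.mul_one]; omega
      calc c i < (K + 1) * (m i + 1) := this
      _ ≤ (K + 1) * m j := Nat.mul_le_mul_left _ hij
      _ ≤ c j := Nat.le_add_right _ _
    have hcle : ∀ i j, c i ≤ c j → m i ≤ m j := by
      intro i j hij
      by_contra hlt
      exact absurd (hcmono j i (by omega)) (by omega)
    have hcinj : Function.Injective c := by
      intro i j hij
      have h1 : m i = m j :=
        le_antisymm (hcle i j hij.le) (hcle j i hij.ge)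
      apply hordinj
      simp only [hc, h1] at hij
      omega
    -- the "top of class" predicate
    set P : ι → Prop := fun i => ∀ j, q j = q i → c j ≤ c i with hP
    have htop : ∀ i, ∃ b, P b ∧ q b = q i ∧ m i ∣ m b := by
      intro i
      obtain ⟨b, hbmem, hbmax⟩ := Finset.exists_max_image
        (Finset.univ.filter fun j => q j = q i) c ⟨i, by simp⟩
      simp only [Finset.mem_filter, Finset.mem_univ, true_and] at hbmem
      refine ⟨b, fun j hj => hbmax j (by simp [hj, hbmem]), hbmem, ?_⟩
      have hci : c i ≤ c b := hbmax i (by simp)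
      exact hdvd_class i b hbmem.symm (hcle _ _ hci)
    -- pairwise coprimality of the tops
    have hcop : Pairwise (Function.onFun Nat.Coprime fun i : {i // P i} => m i.1) := by
      intro i j hij
      have hqq : q i.1 ≠ q j.1 := by
        intro hqq
        refine hij (Subtype.ext (hcinj (le_antisymm ?_ ?_)))
        · exact j.2 i.1 hqq
        · exact i.2 j.1 hqq.symm
      obtain ⟨e, he, hei⟩ := hqm i.1; obtain ⟨f, hf, hej⟩ := hqm j.1
      rw [Function.onFun, hei, hej]
      exact Nat.Coprime.pow _ _ ((Nat.coprime_primes (hq i.1) (hq j.1)).mpr hqq)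
    set D : ℕ := ∏ i : {i // P i}, m i.1 with hD
    have hDpos : 0 < D := Finset.prod_pos fun i _ => by have := hm2 i.1; omega
    have hmD : ∀ i, m i ∣ D := by
      intro i
      obtain ⟨b, hb, _, hdvd⟩ := htop i
      exact hdvd.trans (Finset.dvd_prod_of_mem _ (Finset.mem_univ (⟨b, hb⟩ : {i // P i})))
    have hD2 : 2 ≤ D := le_trans (hm2 (Classical.arbitrary ι))
      (Nat.le_of_dvd hDpos (hmD _))
    have hlcmD : Finset.univ.lcm m ∣ D := Finset.lcm_dvd fun i _ => hmD i
    have hDlcm : D ∣ Finset.univ.lcm m := by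
      refine Fintype.prod_dvd_of_isRelPrime (fun i j hij => ?_)
        (fun i => Finset.dvd_lcm (Finset.mem_univ i.1))
      intro k hk1 hk2
      exact Nat.isUnit_iff.mpr (Nat.dvd_one.mp ((hcop hij) ▸ Nat.dvd_gcd hk1 hk2))
    -- induction on the complement
    have hex : ∃ b, P b := (htop (Classical.arbitrary ι)).imp fun b h => h.1
    obtain ⟨b0, hb0⟩ := hex
    have hcard' : Fintype.card {i // ¬ P i} ≤ N := by
      have hlt : Fintype.card {i // ¬ P i} < Fintype.card ι :=
        Fintype.card_subtype_lt (p := fun i => ¬ P i) (x := b0) (not_not_intro hb0)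
      omega
    obtain ⟨s, d, hd2, hchain, hdl, ⟨g⟩⟩ := IH {i // ¬ P i} inferInstance hcard'
      (fun i => m i.1) (fun i => hm i.1)
    have hlcm' : Finset.univ.lcm (fun i : {i // ¬ P i} => m i.1) ∣ Finset.univ.lcm m :=
      Finset.lcm_dvd fun i _ => Finset.dvd_lcm (Finset.mem_univ i.1)
    have hdD : ∀ j, d j ∣ D := fun j => ((hdl j).trans hlcm').trans hlcmD
    -- assemble
    refine ⟨s + 1, Fin.snoc d D, ?_, ?_, ?_, ?_⟩
    · intro j
      refine Fin.lastCases ?_ (fun j => ?_) j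
      · rw [Fin.snoc_last]; exact hD2
      · rw [Fin.snoc_castSucc]; exact hd2 j
    · intro i h1
      by_cases hi : i + 1 < s
      · have e1 : (⟨i, Nat.lt_of_succ_lt h1⟩ : Fin (s + 1)) =
          Fin.castSucc ⟨i, Nat.lt_of_succ_lt hi⟩ := rfl
        have e2 : (⟨i + 1, h1⟩ : Fin (s + 1)) = Fin.castSucc ⟨i + 1, hi⟩ := rfl
        rw [e1, e2, Fin.snoc_castSucc, Fin.snoc_castSucc]
        exact hchain i hi
      · have hs : i + 1 = s := by omega
        have e2 : (⟨i + 1, h1⟩ : Fin (s + 1)) = Fin.last s := by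
          simp [Fin.ext_iff, hs]
        have e1 : (⟨i, Nat.lt_of_succ_lt h1⟩ : Fin (s + 1)) =
          Fin.castSucc ⟨i, by omega⟩ := rfl
        rw [e1, e2, Fin.snoc_castSucc, Fin.snoc_last]
        exact hdD _
    · intro j
      refine Fin.lastCases ?_ (fun j => ?_) j
      · rw [Fin.snoc_last]; exact hDlcm
      · rw [Fin.snoc_castSucc]; exact (hdl j).trans hlcm'
    · set d' : Fin (s + 1) → ℕ := Fin.snoc d D with hd'
      have e1 : (∀ i, ZMod (m i)) ≃+
          (∀ i : {i // P i}, ZMod (m i.1)) × (∀ i : {i // ¬ P i}, ZMod (m i.1)) :=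
        (RingEquiv.piEquivPiSubtypeProd P fun i => ZMod (m i)).toAddEquiv
      have e2 : (∀ i : {i // P i}, ZMod (m i.1)) ≃+ ZMod D :=
        (ZMod.prodEquivPi _ hcop).symm.toAddEquiv
      have e3 : ZMod D ≃+ ZMod (d' (Fin.last s)) :=
        (ZMod.ringEquivCongr (by rw [hd', Fin.snoc_last])).toAddEquiv
      have e4 : ∀ j : Fin s, ZMod (d j) ≃+ ZMod (d' j.castSucc) := fun j =>
        (ZMod.ringEquivCongr (by rw [hd', Fin.snoc_castSucc])).toAddEquiv
      exact ⟨e1.trans <| (AddEquiv.prodCongr (e2.trans e3)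
        (g.trans (AddEquiv.piCongrRight e4))).trans (snocAddEquiv fun j => ZMod (d' j))⟩

/-- Structure theorem for finitely generated commutative groups: every finitely
generated abelian group is a direct product of a free abelian group and finitely
many finite cyclic groups whose orders successively divide one another. -/
theorem fg_addCommGroup_structure (A : Type*) [AddCommGroup A] (h : AddGroup.FG A) :
    ∃ (n s : ℕ) (d : Fin s → ℕ),
      (∀ i, 2 ≤ d i) ∧
      (∀ (i : ℕ) (h1 : i + 1 < s), d ⟨i, Nat.lt_of_succ_lt h1⟩ ∣ d ⟨i + 1, h1⟩) ∧
      Nonempty (A ≃+ (Fin n → ℤ) × ((i : Fin s) → ZMod (d i))) := by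
  classical
  haveI := h
  obtain ⟨n, ι, fι, p, hp, e, ⟨f⟩⟩ := AddCommGroup.equiv_free_prod_directSum_zmod A
  have hsub : ∀ i, ¬ e i ≠ 0 → Subsingleton (ZMod (p i ^ e i)) := by
    intro i hi
    rw [not_not.mp hi, pow_zero]
    infer_instance
  obtain ⟨s, d, hd2, hchain, -, ⟨g⟩⟩ := key_lemma (Fintype.card {i // e i ≠ 0})
    {i // e i ≠ 0} inferInstance le_rfl (fun i => p i.1 ^ e i.1)
    (fun i => ⟨p i.1, e i.1, hp i.1, Nat.pos_of_ne_zero i.2, rfl⟩)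
  refine ⟨n, s, d, hd2, hchain, ⟨f.trans <| AddEquiv.prodCongr
    Finsupp.addEquivFunOnFinite <| (DirectSum.addEquivProd _).trans <|
    ((piSubtypeAddEquiv (fun i => e i ≠ 0) (fun i => ZMod (p i ^ e i)) hsub).trans g)⟩⟩
end

section
/- Uniqueness of the invariant factors: the elementary divisors different from 1 and the free rank determine and are determined by the group. Precisely: suppose n, n′, s, s′ are natural numbers, d : Fin s → ℕ and d′ : Fin s′ → ℕ satisfy dᵢ ≥ 2, dᵢ ∣ dᵢ₊₁ and d′ᵢ ≥ 2, d′ᵢ ∣ d′ᵢ₊₁, and suppose the additive groups (Fin n → ℤ) × Π_i ZMod (d i) and (Fin n′ → ℤ) × Π_i ZMod (d′ i) are isomorphic. Then n = n′, s = s′, and d i = d′ i for all i. -/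
open Finset


-- ZMod torsion count
lemma tor_count_zmod (m k : ℕ) (hm : 0 < m) (hk : 0 < k) :
    Nat.card {x : ZMod k // m • x = 0} = Nat.gcd m k := by
  haveI : NeZero k := ⟨hk.ne'⟩
  set g := Nat.gcd m k with hg
  have hgpos : 0 < g := Nat.gcd_pos_of_pos_left _ hm
  have hgk : g ∣ k := Nat.gcd_dvd_right m k
  have hgm : g ∣ m := Nat.gcd_dvd_left m k
  obtain ⟨k₁, hk₁⟩ := hgk
  obtain ⟨m₁, hm₁⟩ := hgm
  have hk₁' : k / g = k₁ := by rw [hk₁]; exact Nat.mul_div_cancel_left _ hgpos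
  set S : AddSubgroup (ZMod k) :=
    { carrier := {x | m • x = 0}
      zero_mem' := smul_zero m
      add_mem' := by
        intro a b ha hb
        simp only [Set.mem_setOf_eq] at *
        rw [smul_add, ha, hb, add_zero]
      neg_mem' := by
        intro a ha
        simp only [Set.mem_setOf_eq] at *
        rw [smul_neg, ha, neg_zero] } with hS
  have hSeq : S = AddSubgroup.zmultiples ((k₁ : ℕ) : ZMod k) := by
    ext x
    constructor
    · intro hx
      simp only [hS, AddSubgroup.mem_mk, Set.mem_setOf_eq] at hx
      obtain ⟨a, rfl⟩ : ∃ a : ℕ, (a : ZMod k) = x := ⟨x.val, ZMod.natCast_rightInverse x⟩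
      have hdvd : k ∣ m * a := by
        have : ((m * a : ℕ) : ZMod k) = 0 := by
          rw [Nat.cast_mul, ← nsmul_eq_mul, ← Nat.cast_smul_eq_nsmul ℕ]
          exact hx
        exact (ZMod.natCast_eq_zero_iff _ _).mp this
      have hcop : Nat.Coprime m₁ k₁ := by
        have := Nat.coprime_div_gcd_div_gcd (m := m) (n := k) hgpos
        rwa [← hg, hk₁', show m / g = m₁ from by rw [hm₁]; exact Nat.mul_div_cancel_left _ hgpos] at this
      have h2 : k₁ ∣ m₁ * a := by
        obtain ⟨c, hc⟩ := hdvd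
        refine ⟨c, ?_⟩
        have : g * (m₁ * a) = g * (k₁ * c) := by
          rw [← mul_assoc, ← hm₁, hc, hk₁, mul_assoc]
        exact Nat.eq_of_mul_eq_mul_left hgpos this
      obtain ⟨t, ht⟩ := (Nat.Coprime.dvd_of_dvd_mul_left hcop.symm h2 : k₁ ∣ a)
      refine AddSubgroup.mem_zmultiples_iff.mpr ⟨(t : ℤ), ?_⟩
      subst ht
      rw [natCast_zsmul, ← Nat.cast_smul_eq_nsmul ℕ, nsmul_eq_mul]
      push_cast
      ring
    · intro hx
      have hmem : ((k₁ : ℕ) : ZMod k) ∈ S := by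
        simp only [hS, AddSubgroup.mem_mk, Set.mem_setOf_eq]
        show m • ((k₁ : ℕ) : ZMod k) = 0
        rw [← Nat.cast_smul_eq_nsmul ℕ, nsmul_eq_mul, ← Nat.cast_mul]
        have : k ∣ m * k₁ := ⟨m₁, by rw [hm₁, hk₁]; ring⟩
        exact (ZMod.natCast_eq_zero_iff _ _).mpr this
      exact (AddSubgroup.zmultiples_le.mpr hmem) hx
  have hcard : Nat.card {x : ZMod k // m • x = 0} = Nat.card S :=
    Nat.card_congr (Equiv.subtypeEquivRight (fun x => Iff.rfl))
  rw [hcard, hSeq, Nat.card_zmultiples, ZMod.addOrderOf_coe _ hk.ne']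
  have hk₁k : k₁ ∣ k := ⟨g, by rw [hk₁]; ring⟩
  rw [Nat.gcd_eq_right hk₁k, ← hk₁', Nat.div_div_self ⟨k₁, hk₁⟩ hk.ne']


lemma tor_count_congr {G H : Type*} [AddCommGroup G] [AddCommGroup H] (e : G ≃+ H) (m : ℕ) :
    Nat.card {x : G // m • x = 0} = Nat.card {x : H // m • x = 0} := by
  refine Nat.card_congr (e.toEquiv.subtypeEquiv fun x => ?_)
  simp only [AddEquiv.toEquiv_eq_coe, EquivLike.coe_coe]
  rw [← map_nsmul e, EmbeddingLike.map_eq_zero_iff]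

lemma tor_count_main {n s : ℕ} (d : Fin s → ℕ) (hd2 : ∀ i, 2 ≤ d i) (m : ℕ) (hm : 0 < m)
    (tor_count_zmod : ∀ (m k : ℕ), 0 < m → 0 < k →
      Nat.card {x : ZMod k // m • x = 0} = Nat.gcd m k) :
    Nat.card {x : (Fin n → ℤ) × ((i : Fin s) → ZMod (d i)) // m • x = 0}
      = ∏ i, Nat.gcd m (d i) := by
  have e1 : {x : (Fin n → ℤ) × ((i : Fin s) → ZMod (d i)) // m • x = 0}
      ≃ {a : Fin n → ℤ // m • a = 0} × {b : (i : Fin s) → ZMod (d i) // m • b = 0} :=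
    (Equiv.subtypeEquivRight fun x => by
      constructor
      · intro h; exact ⟨congrArg Prod.fst h, congrArg Prod.snd h⟩
      · intro ⟨h1, h2⟩; exact Prod.ext h1 h2).trans
    (Equiv.subtypeProdEquivProd)
  have key : ∀ x : (i : Fin s) → ZMod (d i), (m • x = 0) ↔ ∀ i, m • x i = 0 :=
    fun x => ⟨fun h i => congrFun h i, fun h => funext fun i => h i⟩
  have e2 : {b : (i : Fin s) → ZMod (d i) // m • b = 0} ≃ ((i : Fin s) → {y : ZMod (d i) // m • y = 0}) :=
    (Equiv.subtypeEquivRight key).trans (Equiv.subtypePiEquivPi (p := fun i y => m • y = 0))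
  haveI : Unique {a : Fin n → ℤ // m • a = 0} := by
    refine ⟨⟨⟨0, smul_zero m⟩⟩, fun a => Subtype.ext ?_⟩
    funext i
    have h : (m : ℤ) * a.1 i = 0 := by
      have := congrFun a.2 i
      simpa [nsmul_eq_mul] using this
    rcases mul_eq_zero.mp h with h' | h'
    · exact absurd h' (by exact_mod_cast hm.ne')
    · exact h'
  rw [Nat.card_congr e1, Nat.card_prod, Nat.card_unique, one_mul, Nat.card_congr e2, Nat.card_pi]
  exact Finset.prod_congr rfl fun i _ => tor_count_zmod m (d i) hm (by have := hd2 i; omega)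

lemma rank_free_part (n s : ℕ) (d : Fin s → ℕ) (hd2 : ∀ i, 2 ≤ d i) :
    Module.rank ℤ ((Fin n → ℤ) × ((i : Fin s) → ZMod (d i))) = n := by
  set T := (i : Fin s) → ZMod (d i)
  set f : ((Fin n → ℤ) × T) →ₗ[ℤ] (Fin n → ℤ) := LinearMap.fst ℤ (Fin n → ℤ) T with hf
  have hker : LinearMap.ker f ≤ Submodule.torsion ℤ ((Fin n → ℤ) × T) := by
    intro x hx
    have hx1 : x.1 = 0 := hx
    have hP : 0 < ∏ i, d i := Finset.prod_pos fun i _ => by have := hd2 i; omega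
    refine ⟨⟨(∏ i, d i : ℕ), mem_nonZeroDivisors_of_ne_zero (by exact_mod_cast hP.ne')⟩, ?_⟩
    have h2 : ((∏ i, d i : ℕ) : ℤ) • x.2 = 0 := by
      funext i
      have hdvd : d i ∣ ∏ j, d j := Finset.dvd_prod_of_mem d (Finset.mem_univ i)
      obtain ⟨c, hc⟩ := hdvd
      show ((∏ j, d j : ℕ) : ℤ) • x.2 i = 0
      rw [hc, Nat.cast_mul, mul_comm, mul_smul]
      have : ((d i : ℕ) : ℤ) • x.2 i = 0 := by
        rw [Nat.cast_smul_eq_nsmul ℤ]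
        exact ZModModule.char_nsmul_eq_zero (d i) (x.2 i)
      rw [this, smul_zero]
    have : ((∏ i, d i : ℕ) : ℤ) • x = 0 := by
      apply Prod.ext
      · show ((∏ i, d i : ℕ) : ℤ) • x.1 = 0
        rw [hx1, smul_zero]
      · exact h2
    exact this
  have h1 := rank_quotient_eq_of_le_torsion hker
  have h2 := LinearEquiv.rank_eq (f.quotKerEquivOfSurjective (Prod.fst_surjective))
  rw [← h1, h2, rank_fin_fun]


lemma chain_mono {s : ℕ} (d : Fin s → ℕ)
    (hdvd : ∀ (i : ℕ) (h1 : i + 1 < s), d ⟨i, Nat.lt_of_succ_lt h1⟩ ∣ d ⟨i + 1, h1⟩) :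
    ∀ i j : Fin s, i ≤ j → d i ∣ d j := by
  suffices h : ∀ (b a : ℕ) (ha : a < s) (hb : b < s), a ≤ b → d ⟨a, ha⟩ ∣ d ⟨b, hb⟩ by
    intro i j hij
    exact h j.val i.val i.isLt j.isLt hij
  intro b
  induction b with
  | zero => intro a ha hb hab; interval_cases a; exact dvd_rfl
  | succ b ih =>
    intro a ha hb hab
    rcases Nat.eq_or_lt_of_le hab with h | h
    · subst h; exact dvd_rfl
    · exact (ih a ha (Nat.lt_of_succ_lt hb) (Nat.lt_succ_iff.mp h)).trans (hdvd b hb)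

lemma gcd_pow_step {p k D : ℕ} (hp : p.Prime) (hk : 1 ≤ k) :
    Nat.gcd (p ^ k) D = Nat.gcd (p ^ (k - 1)) D * (if p ^ k ∣ D then p else 1) := by
  have hkk : k - 1 + 1 = k := by omega
  by_cases h : p ^ k ∣ D
  · rw [if_pos h, Nat.gcd_eq_left h,
      Nat.gcd_eq_left ((pow_dvd_pow p (by omega : k - 1 ≤ k)).trans h), ← pow_succ, hkk]
  · rw [if_neg h, mul_one]
    obtain ⟨j, hj, hje⟩ := (Nat.dvd_prime_pow hp).mp (Nat.gcd_dvd_left (p ^ k) D)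
    have hjk : j ≤ k - 1 := by
      rcases Nat.eq_or_lt_of_le hj with h' | h'
      · exfalso; apply h; rw [← h']; rw [← hje]; exact Nat.gcd_dvd_right _ _
      · omega
    apply Nat.dvd_antisymm
    · rw [hje]
      exact Nat.dvd_gcd (pow_dvd_pow p hjk) (hje ▸ Nat.gcd_dvd_right (p ^ k) D)
    · exact Nat.dvd_gcd ((Nat.gcd_dvd_left _ _).trans (pow_dvd_pow p (by omega)))
        (Nat.gcd_dvd_right _ _)

lemma prod_gcd_pow {s : ℕ} (d : Fin s → ℕ) {p k : ℕ} (hp : p.Prime) (hk : 1 ≤ k) :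
    ∏ i, Nat.gcd (p ^ k) (d i)
      = (∏ i, Nat.gcd (p ^ (k - 1)) (d i)) * p ^ (univ.filter (fun i => p ^ k ∣ d i)).card := by
  have : ∀ i : Fin s, Nat.gcd (p ^ k) (d i)
      = Nat.gcd (p ^ (k - 1)) (d i) * (if p ^ k ∣ d i then p else 1) :=
    fun i => gcd_pow_step hp hk
  rw [Finset.prod_congr rfl (fun i _ => this i), Finset.prod_mul_distrib]
  congr 1
  rw [← Finset.prod_filter, Finset.prod_const]

-- key: for a divisibility chain, membership of M ∣ d i is determined by the count
lemma dvd_iff_count {s : ℕ} (d : Fin s → ℕ)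
    (hmono : ∀ i j : Fin s, i ≤ j → d i ∣ d j) (M : ℕ) (i : Fin s) :
    M ∣ d i ↔ s - (univ.filter (fun j => M ∣ d j)).card ≤ i.val := by
  set c := (univ.filter (fun j => M ∣ d j)).card with hc
  constructor
  · intro h
    have hsub : Finset.Ici i ⊆ univ.filter (fun j => M ∣ d j) := by
      intro j hj
      simp only [mem_filter, mem_univ, true_and]
      exact (h).trans (hmono i j (Finset.mem_Ici.mp hj))
    have := Finset.card_le_card hsub
    rw [Fin.card_Ici] at this
    omega
  · intro h
    by_contra hnd
    have hsub : univ.filter (fun j => M ∣ d j) ⊆ Finset.Ioi i := by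
      intro j hj
      simp only [mem_filter, mem_univ, true_and] at hj
      rw [Finset.mem_Ioi]
      by_contra hle
      exact hnd (hj.trans (hmono j i (not_lt.mp hle)))
    have := Finset.card_le_card hsub
    rw [Fin.card_Ioi] at this
    have hi := i.isLt
    omega


lemma size_le {s s' : ℕ} (d : Fin s → ℕ) (d' : Fin s' → ℕ) (hd2 : ∀ i, 2 ≤ d i)
    (hmono : ∀ i j : Fin s, i ≤ j → d i ∣ d j)
    (hc : ∀ p : ℕ, p.Prime →
      (univ.filter fun i => p ^ 1 ∣ d i).card = (univ.filter fun i => p ^ 1 ∣ d' i).card) :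
    s ≤ s' := by
  rcases Nat.eq_zero_or_pos s with hs | hs
  · omega
  · set i0 : Fin s := ⟨0, hs⟩
    obtain ⟨p, hp, hpd⟩ := Nat.exists_prime_and_dvd (n := d i0) (by have := hd2 i0; omega)
    have hfull : (univ.filter fun i => p ^ 1 ∣ d i) = (univ : Finset (Fin s)) := by
      apply Finset.filter_true_of_mem
      intro i _
      rw [pow_one]
      exact hpd.trans (hmono i0 i (Fin.mk_le_mk.mpr (Nat.zero_le _)))
    have h1 : (univ.filter fun i => p ^ 1 ∣ d i).card = s := by
      rw [hfull, Finset.card_univ, Fintype.card_fin]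
    have h2 : (univ.filter fun i => p ^ 1 ∣ d' i).card ≤ s' := by
      calc (univ.filter fun i => p ^ 1 ∣ d' i).card ≤ (univ : Finset (Fin s')).card :=
            Finset.card_filter_le _ _
        _ = s' := by rw [Finset.card_univ, Fintype.card_fin]
    rw [← h1, hc p hp]
    exact h2

/-- Uniqueness of the invariant factors: the free rank and the elementary
divisors (≠ 1, with successive divisibility) are determined by the group. -/
theorem invariant_factors_unique (n n' s s' : ℕ)
    (d : Fin s → ℕ) (d' : Fin s' → ℕ)
    (hd2 : ∀ i, 2 ≤ d i)
    (hdvd : ∀ (i : ℕ) (h1 : i + 1 < s), d ⟨i, Nat.lt_of_succ_lt h1⟩ ∣ d ⟨i + 1, h1⟩)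
    (hd2' : ∀ i, 2 ≤ d' i)
    (hdvd' : ∀ (i : ℕ) (h1 : i + 1 < s'), d' ⟨i, Nat.lt_of_succ_lt h1⟩ ∣ d' ⟨i + 1, h1⟩)
    (e : ((Fin n → ℤ) × ((i : Fin s) → ZMod (d i))) ≃+
      ((Fin n' → ℤ) × ((i : Fin s') → ZMod (d' i)))) :
    n = n' ∧ ∃ hs : s = s', ∀ i : Fin s, d i = d' (Fin.cast hs i) := by
  have hmono := chain_mono d hdvd
  have hmono' := chain_mono d' hdvd'
  -- rank: n = n'
  have hn : n = n' := by
    have h1 := rank_free_part n s d hd2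
    have h2 := rank_free_part n' s' d' hd2'
    have h3 := LinearEquiv.rank_eq e.toIntLinearEquiv
    rw [h1, h2] at h3
    exact_mod_cast h3
  -- torsion counts
  have hcnt : ∀ m : ℕ, 0 < m → ∏ i, Nat.gcd m (d i) = ∏ i, Nat.gcd m (d' i) := by
    intro m hm
    rw [← tor_count_main d hd2 m hm tor_count_zmod, ← tor_count_main d' hd2' m hm tor_count_zmod]
    exact tor_count_congr e m
  -- counts of prime-power divisors agree
  have hc2 : ∀ p : ℕ, p.Prime → ∀ k : ℕ, 1 ≤ k →
      (univ.filter fun i => p ^ k ∣ d i).card = (univ.filter fun i => p ^ k ∣ d' i).card := by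
    intro p hp k hk
    have h1 := prod_gcd_pow d hp hk
    have h2 := prod_gcd_pow d' hp hk
    have e1 : ∏ i, Nat.gcd (p ^ k) (d i) = ∏ i, Nat.gcd (p ^ k) (d' i) :=
      hcnt _ (pow_pos hp.pos k)
    have e0 : ∏ i, Nat.gcd (p ^ (k - 1)) (d i) = ∏ i, Nat.gcd (p ^ (k - 1)) (d' i) :=
      hcnt _ (pow_pos hp.pos (k - 1))
    rw [h1, h2, e0] at e1
    have hpos : 0 < ∏ i : Fin s', Nat.gcd (p ^ (k - 1)) (d' i) :=
      Finset.prod_pos fun i _ => Nat.gcd_pos_of_pos_left _ (pow_pos hp.pos _)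
    have := Nat.eq_of_mul_eq_mul_left hpos e1
    exact Nat.pow_right_injective hp.two_le this
  -- s = s'
  have hss : s = s' := by
    refine le_antisymm ?_ ?_
    · exact size_le d d' hd2 hmono fun p hp => hc2 p hp 1 le_rfl
    · exact size_le d' d hd2' hmono' fun p hp => (hc2 p hp 1 le_rfl).symm
  subst hss
  refine ⟨hn, rfl, ?_⟩
  intro i
  have hci : Fin.cast rfl i = i := rfl
  rw [hci]
  have hdd : ∀ p : ℕ, p.Prime → ∀ k : ℕ, (p ^ k ∣ d i ↔ p ^ k ∣ d' i) := by
    intro p hp k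
    rcases Nat.eq_zero_or_pos k with hk | hk
    · subst hk; simp
    · rw [dvd_iff_count d hmono, dvd_iff_count d' hmono', hc2 p hp k hk]
  have hne : d i ≠ 0 := by have := hd2 i; omega
  have hne' : d' i ≠ 0 := by have := hd2' i; omega
  rw [Nat.eq_iff_prime_padicValNat_eq _ _ hne hne']
  intro p hp
  have key : ∀ k : ℕ, k ≤ padicValNat p (d i) ↔ k ≤ padicValNat p (d' i) := by
    intro k
    rw [← Nat.factorization_def _ hp, ← Nat.factorization_def _ hp,
      ← hp.pow_dvd_iff_le_factorization hne, ← hp.pow_dvd_iff_le_factorization hne']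
    exact hdd p hp k
  have h1 := (key (padicValNat p (d i))).mp le_rfl
  have h2 := (key (padicValNat p (d' i))).mpr le_rfl
  omega
end

section
/- Equivalent integer matrices have the same greatest common divisors of k-rowed minors, and hence the same rank and elementary divisors. Precisely: let A be an m × n matrix over ℤ, U an invertible m × m integer matrix, V an invertible n × n integer matrix, and B = U * A * V. Then for every k, the greatest common divisor (as a natural number) of the determinants of all k × k submatrices of A (obtained by selecting k rows and k columns via injective maps Fin k → Fin m and Fin k → Fin n) equals the greatest common divisor of the determinants of all k × k submatrices of B. -/
/-- The greatest common divisor (as a natural number) of the determinants of all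
`k × k` submatrices of an integer matrix, over all choices of `k` rows and `k`
columns (given by injective maps). -/
noncomputable def minorGcd {m n : ℕ} (A : Matrix (Fin m) (Fin n) ℤ) (k : ℕ) : ℕ :=
  Finset.gcd Finset.univ
    (fun p : {f : Fin k → Fin m // Function.Injective f} ×
        {g : Fin k → Fin n // Function.Injective g} =>
      (Matrix.det (A.submatrix p.1.1 p.2.1)).natAbs)

open Matrix

lemma minorGcd_dvd {m n k : ℕ} (A : Matrix (Fin m) (Fin n) ℤ)
    {f : Fin k → Fin m} (hf : Function.Injective f)
    {g : Fin k → Fin n} (hg : Function.Injective g) :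
    (minorGcd A k : ℤ) ∣ (A.submatrix f g).det := by
  have h : minorGcd A k ∣ (Matrix.det (A.submatrix f g)).natAbs :=
    Finset.gcd_dvd (Finset.mem_univ
    ((⟨⟨f, hf⟩, ⟨g, hg⟩⟩ : {f : Fin k → Fin m // Function.Injective f} ×
        {g : Fin k → Fin n // Function.Injective g})))
  exact (Int.natCast_dvd_natCast.2 h).trans (Int.natAbs_dvd.2 dvd_rfl)

lemma det_mul_submatrix_expand {m n k : ℕ} (A : Matrix (Fin m) (Fin n) ℤ)
    (U : Matrix (Fin m) (Fin m) ℤ) (f : Fin k → Fin m) (g : Fin k → Fin n) :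
    ((U * A).submatrix f g).det
      = ∑ r : Fin k → Fin m, (∏ i, U (f i) (r i)) * (A.submatrix r g).det := by
  have h1 : (U * A).submatrix f g
      = Matrix.of (fun i => ∑ l : Fin m, U (f i) l • (fun j => A l (g j))) := by
    ext i j
    simp [Matrix.mul_apply, Finset.sum_apply]
  rw [h1]
  have := (Matrix.detRowAlternating (R := ℤ) (n := Fin k)).toMultilinearMap.map_sum
    (g := fun (i : Fin k) (l : Fin m) => U (f i) l • (fun j => A l (g j)))
  calc (Matrix.of (fun i => ∑ l : Fin m, U (f i) l • (fun j => A l (g j)))).det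
      = Matrix.detRowAlternating (fun i => ∑ l : Fin m, U (f i) l • (fun j => A l (g j))) := rfl
    _ = ∑ r : Fin k → Fin m, Matrix.detRowAlternating
          (fun i => U (f i) (r i) • (fun j => A (r i) (g j))) := this
    _ = ∑ r : Fin k → Fin m, (∏ i, U (f i) (r i)) * (A.submatrix r g).det := by
        refine Finset.sum_congr rfl fun r _ => ?_
        have h2 := (Matrix.detRowAlternating (R := ℤ) (n := Fin k)).toMultilinearMap.map_smul_univ
          (fun i => U (f i) (r i)) (fun i => (fun j => A (r i) (g j)))
        simp only [AlternatingMap.coe_multilinearMap, smul_eq_mul] at h2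
        rw [h2]
        rfl

lemma minorGcd_dvd_det_mul {m n k : ℕ} (A : Matrix (Fin m) (Fin n) ℤ)
    (U : Matrix (Fin m) (Fin m) ℤ) (f : Fin k → Fin m)
    {g : Fin k → Fin n} (hg : Function.Injective g) :
    (minorGcd A k : ℤ) ∣ ((U * A).submatrix f g).det := by
  rw [det_mul_submatrix_expand]
  refine Finset.dvd_sum fun r _ => ?_
  by_cases hr : Function.Injective r
  · exact (minorGcd_dvd A hr hg).mul_left _
  · obtain ⟨i, j, hij, hne⟩ : ∃ i j, r i = r j ∧ i ≠ j := by
      simp only [Function.Injective, not_forall] at hr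
      obtain ⟨i, j, h1, h2⟩ := hr
      exact ⟨i, j, h1, h2⟩
    have : (A.submatrix r g).det = 0 :=
      Matrix.det_zero_of_row_eq hne (by ext j'; simp [hij])
    simp [this]

lemma minorGcd_left {m n k : ℕ} (A : Matrix (Fin m) (Fin n) ℤ)
    (U : Matrix (Fin m) (Fin m) ℤ) :
    minorGcd A k ∣ minorGcd (U * A) k := by
  refine Finset.dvd_gcd fun p _ => ?_
  have := minorGcd_dvd_det_mul A U p.1.1 p.2.2
  rwa [Int.natCast_dvd] at this

lemma minorGcd_transpose {m n k : ℕ} (A : Matrix (Fin m) (Fin n) ℤ) :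
    minorGcd Aᵀ k = minorGcd A k := by
  have key : ∀ {a b : ℕ} (B : Matrix (Fin a) (Fin b) ℤ),
      minorGcd Bᵀ k ∣ minorGcd B k := by
    intro a b B
    refine Finset.dvd_gcd fun p _ => ?_
    have h : minorGcd Bᵀ k ∣ (Matrix.det (Bᵀ.submatrix p.2.1 p.1.1)).natAbs :=
      Finset.gcd_dvd (Finset.mem_univ
      ((⟨p.2, p.1⟩ : {f : Fin k → Fin b // Function.Injective f} ×
          {g : Fin k → Fin a // Function.Injective g})))
    simpa [minorGcd, ← Matrix.det_transpose (B.submatrix p.1.1 p.2.1),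
      Matrix.transpose_submatrix] using h
  exact Nat.dvd_antisymm (key A) (by simpa using key Aᵀ)

lemma minorGcd_right {m n k : ℕ} (A : Matrix (Fin m) (Fin n) ℤ)
    (V : Matrix (Fin n) (Fin n) ℤ) :
    minorGcd A k ∣ minorGcd (A * V) k := by
  rw [← minorGcd_transpose A, ← minorGcd_transpose (A * V), Matrix.transpose_mul]
  exact minorGcd_left Aᵀ Vᵀ

/-- Equivalent integer matrices (i.e. matrices related by multiplication by
invertible integer matrices on either side) have the same greatest common
divisors of `k`-rowed minors, for every `k`. -/
theorem minorGcd_eq_of_equivalent {m n : ℕ} (A : Matrix (Fin m) (Fin n) ℤ)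
    (U : Matrix (Fin m) (Fin m) ℤ) (V : Matrix (Fin n) (Fin n) ℤ)
    (hU : IsUnit U) (hV : IsUnit V) (k : ℕ) :
    minorGcd A k = minorGcd (U * A * V) k := by
  obtain ⟨u, rfl⟩ := hU
  obtain ⟨v, rfl⟩ := hV
  refine Nat.dvd_antisymm ((minorGcd_left A (u : Matrix (Fin m) (Fin m) ℤ)).trans
    (minorGcd_right ((u : Matrix (Fin m) (Fin m) ℤ) * A) (v : Matrix (Fin n) (Fin n) ℤ))) ?_
  have hA : ((u⁻¹ : (Matrix (Fin m) (Fin m) ℤ)ˣ) : Matrix (Fin m) (Fin m) ℤ) *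
      ((u : Matrix (Fin m) (Fin m) ℤ) * A * (v : Matrix (Fin n) (Fin n) ℤ)) *
      ((v⁻¹ : (Matrix (Fin n) (Fin n) ℤ)ˣ) : Matrix (Fin n) (Fin n) ℤ) = A := by
    have h1 : ((u⁻¹ : (Matrix (Fin m) (Fin m) ℤ)ˣ) : Matrix (Fin m) (Fin m) ℤ) *
        (u : Matrix (Fin m) (Fin m) ℤ) = 1 := u.inv_mul
    have h2 : ((v : Matrix (Fin n) (Fin n) ℤ)) *
        ((v⁻¹ : (Matrix (Fin n) (Fin n) ℤ)ˣ) : Matrix (Fin n) (Fin n) ℤ) = 1 := v.mul_inv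
    rw [Matrix.mul_assoc ((u : Matrix (Fin m) (Fin m) ℤ)) A, ← Matrix.mul_assoc,
      ← Matrix.mul_assoc, h1, Matrix.one_mul, Matrix.mul_assoc, h2, Matrix.mul_one]
  calc minorGcd ((u : Matrix (Fin m) (Fin m) ℤ) * A * (v : Matrix (Fin n) (Fin n) ℤ)) k
      ∣ minorGcd (((u⁻¹ : (Matrix (Fin m) (Fin m) ℤ)ˣ) : Matrix (Fin m) (Fin m) ℤ) *
          ((u : Matrix (Fin m) (Fin m) ℤ) * A * (v : Matrix (Fin n) (Fin n) ℤ)) *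
          ((v⁻¹ : (Matrix (Fin n) (Fin n) ℤ)ˣ) : Matrix (Fin n) (Fin n) ℤ)) k :=
        (minorGcd_left _ _).trans (minorGcd_right _ _)
    _ = minorGcd A k := by rw [hA]
end
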